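/- arXiv:1304.0352 — 7 statements merged into one kernel-verified Lean document; each statement's English description precedes it below -/
import Mathlib

section
/- The number of surjections u from {1,...,2n-2} onto {1,...,n} that are non-degenerate (u(i) ≠ u(i+1) for all i), contain no subsequence of the form (i,j,i,j) with i ≠ j, and contain no subsequence of the form (i,j,i) with j = i+1 or j < i, equals 2·(2n-5)!! for all n ≥ 3 (where (2n-5)!! = (2n-5)(2n-7)···3·1). -/
open Finsupp

/-- The free ℤ-module on sequences (the underlying module of the surjection operad). -/
abbrev FM : Type := List ℕ →₀ ℤ

/-- A sequence is non-degenerate if consecutive entries differ. -/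
def Nondeg (u : List ℕ) : Prop := u.Chain' (· ≠ ·)

/-- `u` has all its values in `{1,…,n}` and attains each of them. -/
def IsSurjSeq (n : ℕ) (u : List ℕ) : Prop :=
  (∀ x ∈ u, x ∈ Finset.Icc 1 n) ∧ ∀ v ∈ Finset.Icc 1 n, v ∈ u

/-- No subsequence of the form (i,j,i,j) with i ≠ j. -/
def NoIJIJ (u : List ℕ) : Prop := ∀ i j : ℕ, i ≠ j → ¬ List.Sublist [i, j, i, j] u

/-- No subsequence of the form (i,j,i) with j = i+1 or j < i. -/
def NoBadIJI (u : List ℕ) : Prop := ∀ i j : ℕ, (j = i + 1 ∨ j < i) → ¬ List.Sublist [i, j, i] u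

/-- A cactus with n lobes in degree k: a non-degenerate surjection
`{1,…,n+k} → {1,…,n}` with no (i,j,i,j) subsequence. -/
def IsCactus (n k : ℕ) (u : List ℕ) : Prop :=
  u.length = n + k ∧ Nondeg u ∧ IsSurjSeq n u ∧ NoIJIJ u

/-- The set C′ₙ: top-degree cacti with no (i,j,i) subsequence with j=i+1 or j<i. -/
def MemC' (n : ℕ) (u : List ℕ) : Prop := IsCactus n (n - 2) u ∧ NoBadIJI u

/-- Does the value at (0-based) index i reappear strictly later in u? -/
def Reoccurs (u : List ℕ) (i : ℕ) : Bool := (u.drop (i+1)).contains (u.getD i 0)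

/-- Relative degree of the prefix of u of length j (number of 0-based indices < j
whose value reappears later in u). -/
def prefDeg (u : List ℕ) (j : ℕ) : ℕ := ((List.range j).filter (fun i => Reoccurs u i)).length

/-- Relative degree of the segment of 0-based indices [a, b-1] of u. -/
def segDeg (u : List ℕ) (a b : ℕ) : ℕ :=
  ((List.range' a (b - a)).filter (fun i => Reoccurs u i)).length

/-- Replace the (0-based) j-th entry u(j) of u by the triple (u(j), w, u(j)). -/
def ringIns (u : List ℕ) (w j : ℕ) : List ℕ :=
  u.take j ++ [u.getD j 0, w, u.getD j 0] ++ u.drop (j+1)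

/-- The largest value occurring in u (the arity n for a surjection onto {1,…,n}). -/
def topVal (u : List ℕ) : ℕ := u.foldr max 0

/-- The degree of a surjection sequence: length minus number of distinct values. -/
def degOf (u : List ℕ) : ℕ := u.length - u.dedup.length

/-- The Berger–Fresse sign exponent for omitting the (0-based) i-th entry. -/
def deltaSignExp (u : List ℕ) (i : ℕ) : ℕ :=
  if Reoccurs u i then prefDeg u i
  else prefDeg u (((List.range i).filter (fun a => u.getD a 0 == u.getD i 0)).getLastD 0 + 1)

/-- The Berger–Fresse differential on a basis sequence. -/
noncomputable def deltaList (u : List ℕ) : FM :=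
  ∑ i ∈ Finset.range u.length,
    if u.count (u.getD i 0) = 1 then 0
    else ((-1 : ℤ) ^ deltaSignExp u i) • Finsupp.single (u.eraseIdx i) 1

/-- The Berger–Fresse differential, extended linearly. -/
noncomputable def deltaFM (x : FM) : FM := x.sum fun u c => c • deltaList u

/-- The white operation u^□ = Σ_{j<i₀} (−1)^{k+|u|_j} ů_j, where i₀ is the position of
the unique occurrence of the top value n and ů_j inserts a lobe n+1 over the j-th entry. -/
noncomputable def sqList (u : List ℕ) : FM :=
  ∑ j ∈ Finset.range (u.idxOf (topVal u)),
    ((-1 : ℤ) ^ (degOf u + prefDeg u j)) • Finsupp.single (ringIns u (topVal u + 1) j) 1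

/-- The black operation u^▪ = −Σ_{j>i₀} (−1)^{k+|u|_j} ů_j. -/
noncomputable def blList (u : List ℕ) : FM :=
  - ∑ j ∈ Finset.Ico (u.idxOf (topVal u) + 1) u.length,
    ((-1 : ℤ) ^ (degOf u + prefDeg u j)) • Finsupp.single (ringIns u (topVal u + 1) j) 1

/-- Linear extension of (−)^□. -/
noncomputable def sqFM (x : FM) : FM := x.sum fun u c => c • sqList u

/-- Linear extension of (−)^▪. -/
noncomputable def blFM (x : FM) : FM := x.sum fun u c => c • blList u

/-- The 0-based positions of the value t in v. -/
def tPositions (v : List ℕ) (t : ℕ) : List ℕ :=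
  (List.range v.length).filter (fun i => v.getD i 0 == t)

/-- Relabelling α(s) = s + t − 1 for the inner factor. -/
def alphaMap (t : ℕ) (l : List ℕ) : List ℕ := l.map (fun s => s + t - 1)

/-- Relabelling β(s) = s for s < t and s + n − 1 for s > t of the outer factor. -/
def betaMap (t nn : ℕ) (l : List ℕ) : List ℕ :=
  l.map (fun s => if s < t then s else s + nn - 1)

/-- The block of u from 1-based position a to b inclusive. -/
def blockSeg (u : List ℕ) (a b : ℕ) : List ℕ := (u.drop (a - 1)).take (b - a + 1)

/-- The q-th piece of v when it is cut at the occurrences of t (whose 0-based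
positions are listed in tp): v = (v₀, t, v₁, t, …, t, v_r). -/
def vPiece (v : List ℕ) (tp : List ℕ) (q : ℕ) : List ℕ :=
  if q = 0 then v.take (tp.getD 0 0)
  else if q = tp.length then v.drop (tp.getD (tp.length - 1) 0 + 1)
  else (v.drop (tp.getD (q-1) 0 + 1)).take (tp.getD q 0 - tp.getD (q-1) 0 - 1)

/-- The Koszul sign exponent Σ_{p ≤ q} deg(u_p)·deg(v_q) for the splitting with
1-based cut points jf = (j₀, …, j_r). -/
def bfSignExp (v : List ℕ) (u : List ℕ) (jf tp : List ℕ) : ℕ :=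
  ∑ p ∈ Finset.Icc 1 tp.length, ∑ q ∈ Finset.Icc p tp.length,
    (segDeg u (jf.getD (p-1) 0 - 1) (jf.getD p 0 - 1)) *
    (if q = tp.length then segDeg v (tp.getD (tp.length - 1) 0) (v.length - 1)
     else segDeg v (tp.getD (q-1) 0) (tp.getD q 0))

/-- The interleaved sequence (βv₀, αu₁, βv₁, …, αu_r, βv_r). -/
def bfResult (v : List ℕ) (t : ℕ) (u : List ℕ) (jf tp : List ℕ) : List ℕ :=
  betaMap t (topVal u) (vPiece v tp 0) ++
  (List.range tp.length).flatMap (fun p =>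
    alphaMap t (blockSeg u (jf.getD p 0) (jf.getD (p+1) 0)) ++
    betaMap t (topVal u) (vPiece v tp (p+1)))

/-- The Berger–Fresse operadic composition v ∘_t u, as a sum over all splittings
1 = j₀ ≤ j₁ ≤ … ≤ j_r = length u with Koszul signs. -/
noncomputable def bfComp (v : List ℕ) (t : ℕ) (u : List ℕ) : FM :=
  ∑ s ∈ Finset.sym (Finset.Icc 1 u.length) ((tPositions v t).length - 1),
    ((-1 : ℤ) ^ bfSignExp v u (1 :: (Multiset.sort s.1 (· ≤ ·) ++ [u.length])) (tPositions v t)) •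
      Finsupp.single
        (bfResult v t u (1 :: (Multiset.sort s.1 (· ≤ ·) ++ [u.length])) (tPositions v t)) 1

/-- Bilinear extension of the Berger–Fresse composition. -/
noncomputable def bfCompFM (x : FM) (t : ℕ) (y : FM) : FM :=
  x.sum fun v c => y.sum fun u d => (c * d) • bfComp v t u

/-- μ on reversed words: the head of the list is the last letter ξ_{n-1}, which is
the outermost operation; `true` stands for □ and `false` for ▪. -/
noncomputable def muW : List Bool → FM
  | [] => 0
  | [b] => Finsupp.single (if b then [2,1] else [1,2]) 1
  | b :: ξ => if b then sqFM (muW ξ) else blFM (muW ξ)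

/-- μ(m_ξ) for a word ξ = (ξ₁,…,ξ_{n-1}) ∈ {□,▪}^{n-1} written in the paper's order. -/
noncomputable def muP (ξ : List Bool) : FM := muW ξ.reverse

/-- Degree-0 (permutation) substitution composition. -/
def permSubst (σ : List ℕ) (t : ℕ) (τ : List ℕ) : List ℕ :=
  σ.flatMap fun s => if s = t then τ.map (· + (t - 1)) else [if s < t then s else s + τ.length - 1]


namespace CProofAux

def P (m : ℕ) (w : List ℕ) : Prop := Nondeg w ∧ IsSurjSeq m w ∧ NoIJIJ w ∧ NoBadIJI w

-- dedupPair
lemma dedupPair {p x y : List ℕ} {a : ℕ} (hc : p.Chain' (· ≠ ·))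
    (h : p.Sublist (x ++ a :: a :: y)) : p.Sublist (x ++ a :: y) := by
  rw [List.sublist_append_iff] at h
  obtain ⟨p1, p2, rfl, h1, h2⟩ := h
  rw [List.sublist_cons_iff] at h2
  rcases h2 with h2 | ⟨r, rfl, hr⟩
  · exact h1.append h2
  rw [List.sublist_cons_iff] at hr
  rcases hr with hr | ⟨r', rfl, hr'⟩
  · exact h1.append (hr.cons₂ a)
  · exfalso
    have : List.Chain' (· ≠ ·) (a :: a :: r') := hc.suffix ⟨p1, rfl⟩
    exact (List.isChain_cons_cons.mp this).1 rfl

lemma sublist_of_not_mem {p x y : List ℕ} {c : ℕ} (h : p.Sublist (x ++ c :: y))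
    (hc : c ∉ p) : p.Sublist (x ++ y) := by
  rw [List.sublist_append_iff] at h
  obtain ⟨p1, p2, rfl, h1, h2⟩ := h
  rw [List.sublist_cons_iff] at h2
  rcases h2 with h2 | ⟨r, rfl, hr⟩
  · exact h1.append h2
  · exact absurd (by simp : c ∈ p1 ++ c :: r) hc

lemma two_le_count_of_iji {i j : ℕ} {w : List ℕ} (h : List.Sublist [i, j, i] w) :
    2 ≤ w.count i := by
  have h2 := h.count_le i
  have : 2 ≤ List.count i [i, j, i] := by
    by_cases hij : j = i <;> simp [List.count_cons, hij]
  omega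

lemma two_le_count_of_ijij {i j : ℕ} {w : List ℕ} (h : List.Sublist [i, j, i, j] w) :
    2 ≤ w.count i := by
  have h2 := h.count_le i
  have : 2 ≤ List.count i [i, j, i, j] := by
    by_cases hij : j = i <;> simp [List.count_cons, hij]
  omega


lemma count_top_eq_one {m : ℕ} {w : List ℕ} (hm : 2 ≤ m) (h : P m w) : w.count m = 1 := by
  obtain ⟨hnd, ⟨hval, hsur⟩, hijij, hbad⟩ := h
  have hmem : m ∈ w := hsur m (by simp; omega)
  have h1 : 1 ≤ w.count m := List.count_pos_iff.mpr hmem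
  by_contra hne
  have h2 : 2 ≤ w.count m := by omega
  have hdup : List.Sublist [m, m] w := List.duplicate_iff_sublist.mp
    (List.duplicate_iff_two_le_count.mpr h2)
  rw [List.cons_sublist_iff] at hdup
  obtain ⟨r1, r2, rfl, hm1, hm2⟩ := hdup
  have hm2' : m ∈ r2 := by simpa using hm2.subset (by simp)
  obtain ⟨s, t, rfl⟩ := List.append_of_mem hm1
  have hmt : m ∈ t ++ r2 := by simp [hm2']
  rcases ht : t ++ r2 with _ | ⟨b, rest⟩
  · simp [ht] at hmt
  have hw : (s ++ m :: t) ++ r2 = s ++ m :: b :: rest := by simp [← ht]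
  rw [hw] at hnd hval hbad
  by_cases hbm : b = m
  · subst hbm
    have hc : List.Chain' (· ≠ ·) (b :: b :: rest) := hnd.suffix ⟨s, rfl⟩
    exact (List.isChain_cons_cons.mp hc).1 rfl
  · have hbw : b ∈ Finset.Icc 1 m := hval b (by simp)
    have hblt : b < m := by simp at hbw; omega
    have hmrest : m ∈ rest := by
      rcases List.mem_cons.mp (ht ▸ hmt) with h | h
      · exact absurd h.symm hbm
      · exact h
    have hsub : List.Sublist [m, b, m] (s ++ m :: b :: rest) := by
      have h3 : List.Sublist [m, b, m] (m :: b :: rest) :=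
        List.Sublist.cons₂ _ (List.Sublist.cons₂ _ (by simpa using hmrest))
      exact h3.trans (List.sublist_append_right s _)
    exact hbad m b (Or.inr hblt) hsub

lemma split_of_count_one {m : ℕ} {w : List ℕ} (h : w.count m = 1) :
    ∃ x y, w = x ++ m :: y ∧ m ∉ x ∧ m ∉ y := by
  have hmem : m ∈ w := List.count_pos_iff.mp (by omega)
  obtain ⟨x, y, rfl⟩ := List.append_of_mem hmem
  refine ⟨x, y, rfl, ?_, ?_⟩ <;>
  · intro hc
    have := List.count_pos_iff.mpr hc
    simp [List.count_append, List.count_cons] at h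
    omega


lemma getD_mid (l t : List ℕ) (a : ℕ) : (l ++ a :: t).getD l.length 0 = a := by
  simp [List.getD_eq_getElem?_getD, List.getElem?_append_right (le_refl l.length)]

lemma step_cases {m : ℕ} (hm : 1 ≤ m) {w : List ℕ} (h : P (m+1) w) :
    (∃ u, P m u ∧ u.length + 1 = w.length) ∨
    (∃ u j, P m u ∧ u.length + 2 = w.length ∧ j < u.length ∧ u.getD j 0 ≠ m ∧
      w = ringIns u (m+1) j) := by
  obtain ⟨x, y, rfl, hmx, hmy⟩ := split_of_count_one (count_top_eq_one (by omega) h)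
  obtain ⟨hnd, ⟨hval, hsur⟩, hijij, hbad⟩ := h
  have mk : ∀ u : List ℕ, u.Sublist (x ++ (m+1) :: y) → Nondeg u → (m+1) ∉ u →
      (∀ v ∈ Finset.Icc 1 m, v ∈ u) → P m u := by
    intro u hsub hndu hnm hatt
    refine ⟨hndu, ⟨?_, hatt⟩, ?_, ?_⟩
    · intro z hz
      have hzw := hval z (hsub.subset hz)
      have : z ≠ m + 1 := fun he => hnm (he ▸ hz)
      simp at hzw ⊢; omega
    · intro i j hij hs; exact hijij i j hij (hs.trans hsub)
    · intro i j hc hs; exact hbad i j hc (hs.trans hsub)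
  rcases y with _ | ⟨b, y'⟩
  · -- y = [] : case B with u = x
    left
    refine ⟨x, mk x (List.sublist_append_left _ _) (hnd.prefix ⟨[m+1], rfl⟩) hmx ?_, by simp⟩
    intro v hv
    have hvm : v ≠ m + 1 := by simp at hv; omega
    have := hsur v (by simp at hv ⊢; omega)
    simp at this
    tauto
  rcases List.eq_nil_or_concat x with rfl | ⟨x', a, rfl⟩
  · -- x = [] : case B with u = y
    left
    have hndy : Nondeg (b :: y') := (List.isChain_cons.mp hnd).2
    refine ⟨b :: y', mk _ (List.sublist_cons_self _ _) hndy hmy ?_, by simp⟩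
    intro v hv
    have hvm : v ≠ m + 1 := by simp at hv; omega
    have := hsur v (by simp at hv ⊢; omega)
    simp at this ⊢
    tauto
  -- x = x' ++ [a]
  simp only [List.concat_eq_append] at *
  have hax : a ∈ x' ++ [a] := by simp
  have ham : a ≤ m := by
    have h2 := hval a (by simp)
    have : a ≠ m + 1 := fun he => hmx (he ▸ hax)
    simp at h2; omega
  by_cases hab : b = a
  · -- case A
    subst hab
    right
    set u := x' ++ b :: y' with hu
    have hchx : Nondeg (x' ++ [b]) := hnd.prefix ⟨(m+1) :: b :: y', by simp⟩
    have hchy : (b :: y').Chain' (· ≠ ·) := hnd.suffix ⟨x' ++ [b, m+1], by simp⟩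
    have hndu : Nondeg u := by
      rw [hu, show x' ++ b :: y' = (x' ++ [b]) ++ y' by simp]
      rw [Nondeg, List.Chain', List.isChain_append]
      refine ⟨hchx, (List.isChain_cons.mp hchy).2, ?_⟩
      intro p hp q hq
      rw [List.getLast?_concat] at hp
      simp at hp; subst hp
      exact (List.isChain_cons.mp hchy).1 q hq
    have hsubu : u.Sublist ((x' ++ [b]) ++ (m+1) :: b :: y') := by
      rw [hu, show x' ++ b :: y' = (x' ++ [b]) ++ y' by simp]
      exact ((List.sublist_cons_self b y').trans (List.sublist_cons_self (m+1) _)).append_left _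
    have hnmu : (m+1) ∉ u := by
      rw [hu]; simp at hmx hmy ⊢; tauto
    have hatt : ∀ v ∈ Finset.Icc 1 m, v ∈ u := by
      intro v hv
      have hvm : v ≠ m + 1 := by simp at hv; omega
      have := hsur v (by simp at hv ⊢; omega)
      rw [hu]; simp at this ⊢
      tauto
    refine ⟨u, x'.length, mk u hsubu hndu hnmu hatt, by simp [hu]; omega,
      by simp [hu], ?_, ?_⟩
    · rw [hu, getD_mid]
      intro hbm
      subst hbm
      exact hbad b (b+1) (Or.inl rfl)
        (((List.sublist_append_left [b, b+1, b] y').trans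
          (List.sublist_append_right x' _)).trans (by simp))
    · rw [ringIns, hu, getD_mid, show x' ++ b :: y' = (x' ++ [b]) ++ y' by simp]
      rw [show x'.length + 1 = (x' ++ [b]).length by simp]
      rw [List.drop_left]
      have : List.take x'.length ((x' ++ [b]) ++ y') = x' := by
        rw [List.append_assoc, List.take_left]
      rw [this]
      simp
  · -- case B with distinct neighbours
    left
    set u := (x' ++ [a]) ++ b :: y' with hu
    have hchx : Nondeg (x' ++ [a]) := hnd.prefix ⟨(m+1) :: b :: y', by simp⟩
    have hchy : (b :: y').Chain' (· ≠ ·) := hnd.suffix ⟨x' ++ [a, m+1], by simp⟩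
    have hndu : Nondeg u := by
      rw [hu, Nondeg, List.Chain', List.isChain_append]
      refine ⟨hchx, hchy, ?_⟩
      intro p hp q hq
      rw [List.getLast?_concat] at hp
      simp at hp hq; subst hp; subst hq
      exact fun h => hab (h.symm)
    have hsubu : u.Sublist ((x' ++ [a]) ++ (m+1) :: b :: y') :=
      (List.sublist_cons_self (m+1) _).append_left _
    have hnmu : (m+1) ∉ u := by
      rw [hu]; simp at hmx hmy ⊢; tauto
    have hatt : ∀ v ∈ Finset.Icc 1 m, v ∈ u := by
      intro v hv
      have hvm : v ≠ m + 1 := by simp at hv; omega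
      have := hsur v (by simp at hv ⊢; omega)
      rw [hu]; simp at this ⊢
      tauto
    exact ⟨u, mk u hsubu hndu hnmu hatt, by simp [hu]; omega⟩


lemma base_two {w : List ℕ} (h : P 2 w) : w.length ≤ 2 := by
  obtain ⟨hnd, ⟨hval, hsur⟩, hijij, hbad⟩ := h
  by_contra hlen
  push_neg at hlen
  rcases w with _ | ⟨c, _ | ⟨d, _ | ⟨e, rest⟩⟩⟩ <;> simp at hlen
  have hcd : c ≠ d := (List.isChain_cons_cons.mp hnd).1
  have hde : d ≠ e := (List.isChain_cons_cons.mp (List.isChain_cons_cons.mp hnd).2).1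
  have hc := hval c (by simp); have hd := hval d (by simp); have he := hval e (by simp)
  simp at hc hd he
  have hce : c = e := by omega
  subst hce
  have hsub : List.Sublist [c, d, c] (c :: d :: c :: rest) := by
    exact List.Sublist.cons₂ _ (List.Sublist.cons₂ _ (by simp))
  exact hbad c d (by omega) hsub

lemma length_bound : ∀ m : ℕ, 2 ≤ m → ∀ w : List ℕ, P m w → w.length ≤ 2 * m - 2 := by
  intro m
  induction m with
  | zero => omega
  | succ m ih =>
    intro hm w hw
    rcases Nat.lt_or_ge m 2 with h2 | h2
    · interval_cases m
      · omega
      · exact base_two hw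
    · rcases step_cases (by omega) hw with ⟨u, hu, hlen⟩ | ⟨u, _, hu, hlen, _⟩ <;>
      · have := ih (by omega) u hu
        omega

lemma structure_top {m : ℕ} (hm : 3 ≤ m) {w : List ℕ} (h : P m w)
    (hlen : w.length = 2 * m - 2) :
    ∃ u j, P (m-1) u ∧ u.length = 2 * m - 4 ∧ j < u.length ∧ u.getD j 0 ≠ m - 1 ∧
      w = ringIns u m j := by
  obtain ⟨m', rfl⟩ : ∃ m', m = m' + 1 := ⟨m - 1, by omega⟩
  rcases step_cases (by omega) h with ⟨u, hu, hl⟩ | ⟨u, j, hu, hl, hj, hja, hr⟩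
  · have := length_bound m' (by omega) u hu
    omega
  · exact ⟨u, j, by simpa using hu, by omega, hj, by simpa using hja, hr⟩


lemma count_pattern4 {i j m : ℕ} (hij : i ≠ j) (him : i = m ∨ j = m) :
    2 ≤ List.count m [i, j, i, j] := by
  rcases him with rfl | rfl <;> simp [List.count_cons, hij, Ne.symm hij]

lemma count_pattern3 {j m : ℕ} : 2 ≤ List.count m [m, j, m] := by
  by_cases h : j = m <;> simp [List.count_cons, h]

set_option maxHeartbeats 2000000 in
lemma forward {m : ℕ} (hm : 3 ≤ m) {u : List ℕ} {j : ℕ} (hu : P (m-1) u)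
    (hj : j < u.length) (hja : u.getD j 0 ≠ m - 1) :
    P m (ringIns u m j) ∧ (ringIns u m j).length = u.length + 2 := by
  have hu' := hu
  obtain ⟨hnd, ⟨hval, hsur⟩, hijij, hbad⟩ := hu
  set x := u.take j with hx
  set y := u.drop (j+1) with hy
  set a := u.getD j 0 with ha
  have hxu : u = x ++ a :: y := by
    rw [hx, hy, ha, List.getD_eq_getElem _ _ hj]
    rw [← List.drop_eq_getElem_cons hj, List.take_append_drop]
  have hxl : x.length = j := by rw [hx]; exact List.length_take_of_le (le_of_lt hj)
  have hw : ringIns u m j = x ++ a :: m :: a :: y := by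
    rw [ringIns, ← hx, ← ha, ← hy]; simp
  have hmval : ∀ z ∈ u, 1 ≤ z ∧ z ≤ m - 1 := by
    intro z hz; have := hval z hz; simp at this; exact this
  have ham : a < m := by
    have := hmval a (hxu ▸ by simp); omega
  have hmnu : m ∉ u := fun hc => by have := hmval m hc; omega
  have hmnx : m ∉ x := fun hc => hmnu (hxu ▸ by simp [hc])
  have hmny : m ∉ y := fun hc => hmnu (hxu ▸ by simp [hc])
  have h1a : 1 ≤ a := (hmval a (hxu ▸ by simp)).1
  rw [hxu] at hnd
  have hchx : List.Chain' (· ≠ ·) x := hnd.prefix ⟨a :: y, rfl⟩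
  have hchay : List.Chain' (· ≠ ·) (a :: y) := hnd.suffix ⟨x, rfl⟩
  have hjcx : ∀ p ∈ x.getLast?, ∀ q ∈ (a :: y).head?, p ≠ q :=
    (List.isChain_append.mp hnd).2.2
  constructor
  · refine ⟨?_, ⟨?_, ?_⟩, ?_, ?_⟩
    · -- Nondeg
      rw [Nondeg, hw, List.Chain', List.isChain_append]
      refine ⟨hchx, ?_, ?_⟩
      · rw [List.isChain_cons]
        refine ⟨by simp; omega, ?_⟩
        rw [List.isChain_cons]
        refine ⟨by simp; omega, hchay⟩
      · intro p hp q hq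
        simp at hq; subst hq
        exact hjcx p hp a (by simp)
    · -- values
      intro z hz
      rw [hw] at hz
      simp at hz ⊢
      rcases hz with h | h | h | h | h
      · have := hmval z (hxu ▸ by simp [h]); omega
      · subst h; omega
      · omega
      · subst h; omega
      · have := hmval z (hxu ▸ by simp [h]); omega
    · -- attained
      intro v hv
      simp at hv
      rw [hw]
      by_cases hvm : v = m
      · simp [hvm]
      · have : v ∈ u := hsur v (by simp; omega)
        rw [hxu] at this
        simp at this ⊢
        tauto
    · -- NoIJIJ
      intro i j' hij hs
      rw [hw] at hs
      by_cases him : i = m ∨ j' = m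
      · have hcm : (x ++ a :: m :: a :: y).count m = 1 := by
          simp [List.count_append, List.count_cons,
            List.count_eq_zero_of_not_mem hmnx, List.count_eq_zero_of_not_mem hmny,
            Ne.symm (Nat.ne_of_lt ham), Nat.ne_of_lt ham]
        have hcle := hs.count_le m
        have := count_pattern4 hij him
        omega
      · push_neg at him
        have hnm : m ∉ [i, j', i, j'] := by simp; tauto
        have hs1 : List.Sublist [i, j', i, j'] ((x ++ [a]) ++ m :: (a :: y)) := by
          simpa using hs
        have hs2 := sublist_of_not_mem hs1 hnm
        have hs3 : List.Sublist [i, j', i, j'] (x ++ a :: y) := by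
          apply dedupPair _ (by simpa using hs2)
          simp [List.Chain', List.isChain_cons_cons, hij, Ne.symm hij]
        exact hijij i j' hij (hxu ▸ hs3)
    · -- NoBadIJI
      intro i j' hcond hs
      rw [hw] at hs
      have hij : i ≠ j' := by omega
      by_cases him : i = m
      · rw [him] at hs
        have hcm : (x ++ a :: m :: a :: y).count m = 1 := by
          simp [List.count_append, List.count_cons,
            List.count_eq_zero_of_not_mem hmnx, List.count_eq_zero_of_not_mem hmny,
            Ne.symm (Nat.ne_of_lt ham), Nat.ne_of_lt ham]
        have hcle := hs.count_le m
        have := count_pattern3 (j := j') (m := m)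
        omega
      by_cases hjm : j' = m
      · -- i = m - 1 case
        rw [hjm] at hs hcond hij
        have hiu : i ∈ u := by
          have hiw : i ∈ x ++ a :: m :: a :: y := hs.subset (by simp)
          rw [hxu]
          simp at hiw ⊢
          tauto
        have him' : i = m - 1 := by
          have := hmval i hiu; omega
        have hia : i ≠ a := by intro hc; omega
        have hcnt : u.count i = 1 := by
          rw [him']; exact count_top_eq_one (by omega) hu'
        have hmxa : m ∉ x ++ [a] := by
          simp [Ne.symm (Nat.ne_of_lt ham)]
          exact hmnx
        have hs1 : List.Sublist [i, m, i] ((x ++ [a]) ++ m :: (a :: y)) := by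
          simpa using hs
        rw [List.sublist_append_iff] at hs1
        obtain ⟨p1, p2, hp, h1, h2⟩ := hs1
        have hmp1 : m ∉ p1 := fun hc => hmxa (h1.subset hc)
        rcases p1 with _ | ⟨c1, p1'⟩
        · simp at hp
          rw [← hp, List.sublist_cons_iff] at h2
          rcases h2 with h2 | ⟨r, hr, _⟩
          · have : m ∈ a :: y := h2.subset (by simp)
            simp at this
            rcases this with h | h
            · exact (Nat.ne_of_lt ham) h.symm
            · exact hmny h
          · obtain ⟨h, -⟩ := List.cons_eq_cons.mp hr
            exact him h
        rcases p1' with _ | ⟨c2, p1''⟩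
        · -- p1 = [c1], p2 = [m, i]
          obtain ⟨hc1, hp2⟩ := List.cons_eq_cons.mp hp
          replace hp2 : [m, i] = p2 := by simpa using hp2
          subst hc1
          rw [← hp2, List.sublist_cons_iff] at h2
          rcases h2 with h2 | ⟨r, hr, hr2⟩
          · have : m ∈ a :: y := h2.subset (by simp)
            simp at this
            rcases this with h | h
            · exact (Nat.ne_of_lt ham) h.symm
            · exact hmny h
          · have hiy : i ∈ y := by
              obtain ⟨-, hr'⟩ := List.cons_eq_cons.mp hr
              have : i ∈ a :: y := hr2.subset (by rw [← hr']; simp)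
              simp at this
              tauto
            have hix : i ∈ x := by
              have : i ∈ x ++ [a] := h1.subset (by simp)
              simp at this
              tauto
            have : 2 ≤ u.count i := by
              rw [hxu, List.count_append, List.count_cons]
              have := List.count_pos_iff.mpr hix
              have := List.count_pos_iff.mpr hiy
              omega
            omega
        · -- p1 has ≥ 2 elements, so m ∈ p1, contradiction
          obtain ⟨-, hp'⟩ := List.cons_eq_cons.mp hp
          obtain ⟨hc2, -⟩ := List.cons_eq_cons.mp hp'
          exact hmp1 (by simp [hc2])
      · push_neg at hjm
        have hnm : m ∉ [i, j', i] := by simp; tauto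
        have hs1 : List.Sublist [i, j', i] ((x ++ [a]) ++ m :: (a :: y)) := by
          simpa using hs
        have hs2 := sublist_of_not_mem hs1 hnm
        have hs3 : List.Sublist [i, j', i] (x ++ a :: y) := by
          apply dedupPair _ (by simpa using hs2)
          simp [List.Chain', List.isChain_cons_cons, hij, Ne.symm hij]
        exact hbad i j' hcond (hxu ▸ hs3)
  · rw [hw, hxu]; simp; omega


lemma memC'_iff {n : ℕ} (hn : 2 ≤ n) {w : List ℕ} :
    MemC' n w ↔ P n w ∧ w.length = 2*n-2 := by
  unfold MemC' IsCactus P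
  constructor
  · rintro ⟨⟨h1, h2, h3, h4⟩, h5⟩
    exact ⟨⟨h2, h3, h4, h5⟩, by omega⟩
  · rintro ⟨⟨h2, h3, h4, h5⟩, h1⟩
    exact ⟨⟨by omega, h2, h3, h4⟩, h5⟩

lemma eq_of_split {m : ℕ} : ∀ {x x' : List ℕ} {y y' : List ℕ}, m ∉ x → m ∉ x' →
    x ++ m :: y = x' ++ m :: y' → x = x' ∧ y = y' := by
  intro x
  induction x with
  | nil =>
    intro x' y y' _ hmx' h
    rcases x' with _ | ⟨c, xs⟩
    · simpa using h
    · obtain ⟨h1, -⟩ := List.cons_eq_cons.mp h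
      exact absurd (by simp [← h1]) hmx'
  | cons c xs ih =>
    intro x' y y' hmx hmx' h
    rcases x' with _ | ⟨c', xs'⟩
    · obtain ⟨h1, -⟩ := List.cons_eq_cons.mp h
      exact absurd (by simp [h1]) hmx
    · obtain ⟨h1, h2⟩ := List.cons_eq_cons.mp h
      obtain ⟨h3, h4⟩ := ih (by simp at hmx; tauto) (by simp at hmx'; tauto) h2
      exact ⟨by rw [h1, h3], h4⟩

lemma getD_split {x y : List ℕ} {c : ℕ} (hcx : c ∉ x) (hcy : c ∉ y) {j : ℕ}
    (hj : j < (x ++ c :: y).length) : ((x ++ c :: y).getD j 0 = c ↔ j = x.length) := by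
  rcases lt_trichotomy j x.length with h | h | h
  · rw [List.getD_eq_getElem _ _ hj, List.getElem_append_left h]
    exact ⟨fun hc => absurd (hc ▸ List.getElem_mem h) hcx, fun hc => by omega⟩
  · subst h
    rw [getD_mid]
    simp
  · rw [List.getD_eq_getElem?_getD, List.getElem?_append_right (by omega : x.length ≤ j)]
    obtain ⟨k, hk⟩ : ∃ k, j - x.length = k + 1 := ⟨j - x.length - 1, by omega⟩
    have hky : k < y.length := by simp at hj; omega
    rw [hk, List.getElem?_cons_succ, List.getElem?_eq_getElem hky]
    simp only [Option.getD_some]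
    exact ⟨fun hc => absurd (hc ▸ List.getElem_mem hky) hcy, fun hc => by omega⟩

lemma ncard_prod (s t : Set ℕ) (u : Set (List ℕ)) : (u ×ˢ t).ncard = u.ncard * t.ncard := by
  rw [← Nat.card_coe_set_eq, ← Nat.card_coe_set_eq, ← Nat.card_coe_set_eq]
  rw [Nat.card_congr (Equiv.Set.prod u t), Nat.card_prod]

lemma card_rec {n : ℕ} (hn : 4 ≤ n) :
    {w : List ℕ | MemC' n w}.ncard = (2*n-5) * {w : List ℕ | MemC' (n-1) w}.ncard := by
  classical
  set Φ : List ℕ × ℕ → List ℕ := fun p => ringIns p.1 n p.2 with hΦ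
  set D : Set (List ℕ × ℕ) :=
    {p | MemC' (n-1) p.1 ∧ p.2 < p.1.length ∧ p.1.getD p.2 0 ≠ n-1} with hD
  have hmem : ∀ u : List ℕ, MemC' (n-1) u ↔ P (n-1) u ∧ u.length = 2*n-4 := by
    intro u
    rw [memC'_iff (by omega)]
    constructor <;> (rintro ⟨h1, h2⟩; exact ⟨h1, by omega⟩)
  -- image
  have himg : Φ '' D = {w : List ℕ | MemC' n w} := by
    ext w
    constructor
    · rintro ⟨⟨u, j⟩, hp, rfl⟩
      simp only [hD, Set.mem_setOf_eq] at hp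
      obtain ⟨hu, hj, hja⟩ := hp
      obtain ⟨hPu, hlu⟩ := (hmem u).mp hu
      obtain ⟨hP, hl⟩ := forward (by omega) hPu hj hja
      exact Set.mem_setOf.mpr ((memC'_iff (by omega)).mpr
        ⟨hP, show (ringIns u n j).length = 2*n-2 by omega⟩)
    · intro hw
      obtain ⟨hP, hl⟩ := (memC'_iff (by omega)).mp hw
      obtain ⟨u, j, hPu, hlu, hj, hja, hr⟩ := structure_top (by omega) hP hl
      exact ⟨(u, j), ⟨(hmem u).mpr ⟨hPu, by omega⟩, hj, hja⟩, hr.symm⟩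
  -- injectivity
  have hinj : Set.InjOn Φ D := by
    rintro ⟨u, j⟩ hp ⟨u', j'⟩ hp' heq
    simp only [hD, Set.mem_setOf_eq] at hp hp'
    obtain ⟨hu, hj, -⟩ := hp
    obtain ⟨hu', hj', -⟩ := hp'
    obtain ⟨hPu, -⟩ := (hmem u).mp hu
    obtain ⟨hPu', -⟩ := (hmem u').mp hu'
    have hnu : n ∉ u := by
      intro hc
      have := hPu.2.1.1 n hc
      simp at this; omega
    have hnu' : n ∉ u' := by
      intro hc
      have := hPu'.2.1.1 n hc
      simp at this; omega
    have hxu : u = u.take j ++ u.getD j 0 :: u.drop (j+1) := by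
      rw [List.getD_eq_getElem _ _ hj, ← List.drop_eq_getElem_cons hj, List.take_append_drop]
    have hxu' : u' = u'.take j' ++ u'.getD j' 0 :: u'.drop (j'+1) := by
      rw [List.getD_eq_getElem _ _ hj', ← List.drop_eq_getElem_cons hj', List.take_append_drop]
    have heq2 : (u.take j ++ [u.getD j 0]) ++ n :: (u.getD j 0 :: u.drop (j+1)) =
        (u'.take j' ++ [u'.getD j' 0]) ++ n :: (u'.getD j' 0 :: u'.drop (j'+1)) := by
      have h0 := heq
      simp only [hΦ, ringIns] at h0
      simpa using h0
    have hax : u.getD j 0 ∈ u := by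
      rw [List.getD_eq_getElem _ _ hj]; exact List.getElem_mem hj
    have hax' : u'.getD j' 0 ∈ u' := by
      rw [List.getD_eq_getElem _ _ hj']; exact List.getElem_mem hj'
    have hnx : n ∉ u.take j ++ [u.getD j 0] := by
      intro hc
      rcases List.mem_append.mp hc with hc | hc
      · exact hnu (List.mem_of_mem_take hc)
      · rw [List.mem_singleton] at hc
        exact hnu (hc ▸ hax)
    have hnx' : n ∉ u'.take j' ++ [u'.getD j' 0] := by
      intro hc
      rcases List.mem_append.mp hc with hc | hc
      · exact hnu' (List.mem_of_mem_take hc)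
      · rw [List.mem_singleton] at hc
        exact hnu' (hc ▸ hax')
    obtain ⟨E1, E2⟩ := eq_of_split hnx hnx' heq2
    obtain ⟨ha, hdy⟩ := List.cons_eq_cons.mp E2
    rw [ha] at E1
    have hx : u.take j = u'.take j' := List.append_cancel_right E1
    have huu : u = u' := by rw [hxu, hxu', hx, ha, hdy]
    have hjj : j = j' := by
      have t1 : (u.take j).length = j := List.length_take_of_le (le_of_lt hj)
      have t2 : (u'.take j').length = j' := List.length_take_of_le (le_of_lt hj')
      rw [← t1, ← t2, hx]
    rw [huu, hjj]
  have h1 : {w : List ℕ | MemC' n w}.ncard = D.ncard := by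
    rw [← himg, Set.ncard_image_of_injOn hinj]
  -- second bijection
  set G : List ℕ × ℕ → List ℕ × ℕ :=
    fun p => (p.1, if p.2 < List.idxOf (n-1) p.1 then p.2 else p.2 - 1) with hG
  set T : Set (List ℕ × ℕ) := {w : List ℕ | MemC' (n-1) w} ×ˢ Set.Iio (2*n-5) with hT
  have key : ∀ u : List ℕ, MemC' (n-1) u →
      List.idxOf (n-1) u < u.length ∧ u.length = 2*n-4 ∧
      (∀ j, j < u.length → (u.getD j 0 = n-1 ↔ j = List.idxOf (n-1) u)) := by
    intro u hu
    obtain ⟨hPu, hlu⟩ := (hmem u).mp hu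
    have hc1 : u.count (n-1) = 1 := count_top_eq_one (by omega) hPu
    obtain ⟨x, y, hxy, hnx, hny⟩ := split_of_count_one hc1
    have hq : List.idxOf (n-1) u = x.length := by
      rw [hxy, List.idxOf_append_of_notMem hnx, List.idxOf_cons_self]
      simp
    refine ⟨?_, hlu, ?_⟩
    · exact List.idxOf_lt_length_iff.mpr (by rw [hxy]; simp)
    · intro j hj
      rw [hq]
      rw [hxy] at hj ⊢
      exact getD_split hnx hny hj
  have hbij : Set.BijOn G D T := by
    refine ⟨?_, ?_, ?_⟩
    · rintro ⟨u, j⟩ hp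
      simp only [hD, Set.mem_setOf_eq] at hp
      obtain ⟨hu, hj, hja⟩ := hp
      obtain ⟨hq, hlu, hiff⟩ := key u hu
      have hjq : j ≠ List.idxOf (n-1) u := fun hc => hja ((hiff j hj).mpr hc)
      simp only [hG, hT, Set.mem_prod, Set.mem_setOf_eq, Set.mem_Iio]
      refine ⟨hu, ?_⟩
      split <;> omega
    · rintro ⟨u, j⟩ hp ⟨u', j'⟩ hp' heq
      simp only [hD, Set.mem_setOf_eq] at hp hp'
      obtain ⟨hu, hj, hja⟩ := hp
      obtain ⟨hu', hj', hja'⟩ := hp'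
      simp only [hG, Prod.mk.injEq] at heq
      obtain ⟨h5, heq2⟩ := heq
      subst h5
      obtain ⟨hq, hlu, hiff⟩ := key u hu
      have hjq : j ≠ List.idxOf (n-1) u := fun hc => hja ((hiff j hj).mpr hc)
      have hjq' : j' ≠ List.idxOf (n-1) u := fun hc => hja' ((hiff j' hj').mpr hc)
      have hjj : j = j' := by
        split_ifs at heq2 <;> omega
      rw [hjj]
    · rintro ⟨u, k⟩ hp
      simp only [hT, Set.mem_prod, Set.mem_setOf_eq, Set.mem_Iio] at hp
      obtain ⟨hu, hk⟩ := hp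
      obtain ⟨hq, hlu, hiff⟩ := key u hu
      set q := List.idxOf (n-1) u with hqdef
      refine ⟨(u, if k < q then k else k + 1), ?_, ?_⟩
      · simp only [hD, Set.mem_setOf_eq]
        refine ⟨hu, ?_, ?_⟩
        · split <;> omega
        · intro hc
          have hlt : (if k < q then k else k + 1) < u.length := by split <;> omega
          have := (hiff _ hlt).mp hc
          split_ifs at this <;> omega
      · have hj0 : (if (if k < q then k else k + 1) < q then (if k < q then k else k + 1)
            else (if k < q then k else k + 1) - 1) = k := by split_ifs <;> omega
        show (u, if (if k < q then k else k + 1) < q then (if k < q then k else k + 1)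
            else (if k < q then k else k + 1) - 1) = (u, k)
        rw [hj0]
  have h2 : D.ncard = T.ncard := by
    rw [← hbij.image_eq, Set.ncard_image_of_injOn hbij.injOn]
  have h3 : T.ncard = {w : List ℕ | MemC' (n-1) w}.ncard * (2*n-5) := by
    rw [hT, ncard_prod ∅ _ _]
    congr 1
    rw [← Finset.coe_Iio, Set.ncard_coe_finset, Nat.card_Iio]
  rw [h1, h2, h3, Nat.mul_comm]


lemma noijij_a : NoIJIJ [1,3,1,2] := by
  intro i j hij hs
  have hi : i ∈ [1,3,1,2] := hs.subset (by simp)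
  have hj : j ∈ [1,3,1,2] := hs.subset (by simp)
  simp at hi hj
  rcases hi with rfl|rfl|rfl|rfl <;> rcases hj with rfl|rfl|rfl|rfl <;>
    first
      | exact hij rfl
      | exact absurd hs (by decide)

lemma noijij_b : NoIJIJ [2,1,3,1] := by
  intro i j hij hs
  have hi : i ∈ [2,1,3,1] := hs.subset (by simp)
  have hj : j ∈ [2,1,3,1] := hs.subset (by simp)
  simp at hi hj
  rcases hi with rfl|rfl|rfl|rfl <;> rcases hj with rfl|rfl|rfl|rfl <;>
    first
      | exact hij rfl
      | exact absurd hs (by decide)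

lemma nobad_a : NoBadIJI [1,3,1,2] := by
  intro i j hcond hs
  have hi : i ∈ [1,3,1,2] := hs.subset (by simp)
  have hj : j ∈ [1,3,1,2] := hs.subset (by simp)
  simp at hi hj
  rcases hi with rfl|rfl|rfl|rfl <;> rcases hj with rfl|rfl|rfl|rfl <;>
    first
      | omega
      | exact absurd hs (by decide)

lemma nobad_b : NoBadIJI [2,1,3,1] := by
  intro i j hcond hs
  have hi : i ∈ [2,1,3,1] := hs.subset (by simp)
  have hj : j ∈ [2,1,3,1] := hs.subset (by simp)
  simp at hi hj
  rcases hi with rfl|rfl|rfl|rfl <;> rcases hj with rfl|rfl|rfl|rfl <;>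
    first
      | omega
      | exact absurd hs (by decide)

lemma base3 : {w : List ℕ | MemC' 3 w}.ncard = 2 := by
  have hset : {w : List ℕ | MemC' 3 w} = {[1,3,1,2], [2,1,3,1]} := by
    ext w
    simp only [Set.mem_setOf_eq, Set.mem_insert_iff, Set.mem_singleton_iff]
    constructor
    · intro hw
      obtain ⟨hP, hl⟩ := (memC'_iff (by omega)).mp hw
      obtain ⟨u, j, hPu, hlu, hj, hja, hr⟩ := structure_top (by omega) hP hl
      rcases u with _ | ⟨c, _ | ⟨d, _ | ⟨e, rest⟩⟩⟩ <;> simp at hlu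
      obtain ⟨hnd, ⟨hval, hsur⟩, -, -⟩ := hPu
      have hcd : c ≠ d := (List.isChain_cons_cons.mp hnd).1
      have hc := hval c (by simp)
      have hd := hval d (by simp)
      simp at hc hd
      have h2m : (2:ℕ) ∈ [c, d] := hsur 2 (by simp)
      simp at h2m hj
      interval_cases j
      · -- j = 0 : getD 0 [c,d] = c ≠ 2
        have hgc : [c, d].getD 0 0 = c := rfl
        rw [hgc] at hja
        have hc1 : c = 1 := by omega
        have hd2 : d = 2 := by omega
        subst hc1; subst hd2
        left
        rw [hr]; rfl
      · have hgd : [c, d].getD 1 0 = d := rfl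
        rw [hgd] at hja
        have hd1 : d = 1 := by omega
        have hc2 : c = 2 := by omega
        subst hd1; subst hc2
        right
        rw [hr]; rfl
    · rintro (rfl | rfl)
      · refine (memC'_iff (by omega)).mpr ⟨⟨?_, ⟨by decide, by decide⟩, noijij_a, nobad_a⟩, rfl⟩
        unfold Nondeg
        simp [List.Chain', List.isChain_cons_cons]
      · refine (memC'_iff (by omega)).mpr ⟨⟨?_, ⟨by decide, by decide⟩, noijij_b, nobad_b⟩, rfl⟩
        unfold Nondeg
        simp [List.Chain', List.isChain_cons_cons]
  rw [hset]
  exact Set.ncard_pair (by decide)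

end CProofAux

/-- for n ≥ 3, the number of elements of C′ₙ is 2·(2n−5)!!. -/


theorem card_C'_eq_two_mul_doubleFactorial (n : ℕ) (hn : 3 ≤ n) :
    {u : List ℕ | MemC' n u}.ncard = 2 * Nat.doubleFactorial (2 * n - 5) := by
  induction n, hn using Nat.le_induction with
  | base => rw [CProofAux.base3]; rfl
  | succ n hn ih =>
    rw [CProofAux.card_rec (by omega)]
    simp only [Nat.add_sub_cancel]
    rw [ih]
    obtain ⟨k, hk⟩ : ∃ k, 2*n-5 = k := ⟨_, rfl⟩
    have h1 : 2*(n+1)-5 = k+2 := by omega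
    rw [h1, hk, Nat.doubleFactorial_add_two]
    ring
end

section
/- For n ≥ 3, every non-degenerate surjection u: {1,...,2n-2} → {1,...,n} with no (i,j,i,j)-subsequence (i≠j) and no (i,j,i)-subsequence with j=i+1 or j<i attains the value n exactly once, and u has one of the two forms (1,2,...,r,n,r,...,2) or (2,...,r,n,r,...,1) read at its first entries and last entries for some r ≤ n-2; in particular the first entry of u is 1 or 2. -/
open Finsupp

section StructAux

open List

/-- Bundle of conditions: nondegenerate, pattern-free, values exactly [1,m]. -/
def CondsAux (m : ℕ) (u : List ℕ) : Prop :=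
  u.Chain' (· ≠ ·) ∧ (∀ i j : ℕ, i ≠ j → ¬ List.Sublist [i, j, i, j] u) ∧
  (∀ i j : ℕ, (j = i + 1 ∨ j < i) → ¬ List.Sublist [i, j, i] u) ∧
  (∀ x ∈ u, 1 ≤ x ∧ x ≤ m) ∧ (∀ v, 1 ≤ v → v ≤ m → v ∈ u)

lemma spreadAux {v : ℕ} : ∀ {u : List ℕ}, u.Chain' (· ≠ ·) → [v, v] <+ u →
    ∃ j, j ≠ v ∧ [v, j, v] <+ u := by
  intro u
  induction u with
  | nil => intro _ h; simp at h
  | cons x u ih =>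
    intro hc h
    cases h with
    | cons _ h =>
      obtain ⟨j, hj, hs⟩ := ih hc.tail h
      exact ⟨j, hj, hs.cons x⟩
    | cons_cons _ h =>
      match u, h with
      | y :: u', h =>
        have hxy : v ≠ y := (List.isChain_cons_cons.1 hc).1
        have hv : v ∈ y :: u' := List.singleton_sublist.1 h
        have hv' : v ∈ u' := by
          rcases List.mem_cons.1 hv with h' | h'
          · exact absurd h' hxy
          · exact h'
        exact ⟨y, fun he => hxy he.symm,
          ((List.singleton_sublist.2 hv').cons₂ y).cons₂ v⟩

lemma countLeOne {m v : ℕ} {u : List ℕ} (hc : u.Chain' (· ≠ ·))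
    (hb : ∀ i j : ℕ, (j = i + 1 ∨ j < i) → ¬ List.Sublist [i, j, i] u)
    (hval : ∀ x ∈ u, 1 ≤ x ∧ x ≤ m) (hv : m ≤ v + 1) : u.count v ≤ 1 := by
  by_contra h
  push_neg at h
  have h2 : [v, v] <+ u := by
    have h3 : List.replicate 2 v <+ u := List.replicate_sublist_iff.2 (by omega)
    simpa using h3
  obtain ⟨j, hj, hs⟩ := spreadAux hc h2
  have hjm := hval j (hs.subset (by simp))
  exact hb v j (by omega) hs

lemma condsOfSublist {m : ℕ} {u w : List ℕ} (h : CondsAux (m+1) u) (hsub : w <+ u)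
    (hchain : w.Chain' (· ≠ ·)) (hmem : ∀ v, 1 ≤ v → v ≤ m → v ∈ w)
    (hnm : (m+1) ∉ w) : CondsAux m w := by
  obtain ⟨hc, h4, hb, hval, hsurj⟩ := h
  refine ⟨hchain, fun i j hij hs => h4 i j hij (hs.trans hsub),
    fun i j hij hs => hb i j hij (hs.trans hsub), fun x hx => ?_, hmem⟩
  have h1 := hval x (hsub.subset hx)
  have h2 : x ≠ m + 1 := fun he => hnm (he ▸ hx)
  omega

lemma decompTop {m : ℕ} {u : List ℕ} (hm : 1 ≤ m) (h : CondsAux m u) :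
    ∃ l r, u = l ++ m :: r ∧ m ∉ l ∧ m ∉ r := by
  obtain ⟨hc, h4, hb, hval, hsurj⟩ := h
  obtain ⟨l, r, rfl⟩ := List.append_of_mem (hsurj m hm le_rfl)
  have h1 : (l ++ m :: r).count m ≤ 1 := countLeOne hc hb hval (by omega)
  rw [List.count_append, List.count_cons_self] at h1
  refine ⟨l, r, rfl, List.count_eq_zero.1 (by omega), List.count_eq_zero.1 (by omega)⟩

lemma reduceAux {m : ℕ} (hm : 1 ≤ m) {u : List ℕ} (h : CondsAux (m+1) u) :
    (∃ w, CondsAux m w ∧ w.length + 1 = u.length) ∨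
    (∃ l' a r', u = l' ++ a :: (m+1) :: a :: r' ∧ 1 ≤ a ∧ a + 1 ≤ m ∧
      CondsAux m (l' ++ a :: r')) := by
  obtain ⟨l, r, rfl, hml, hmr⟩ := decompTop (by omega) h
  obtain ⟨hc, h4, hb, hval, hsurj⟩ := h
  rcases List.eq_nil_or_concat l with rfl | ⟨l', a, rfl⟩
  · -- u = (m+1) :: r
    left
    refine ⟨r, condsOfSublist ⟨hc, h4, hb, hval, hsurj⟩
      (List.sublist_cons_self _ _) hc.tail ?_ hmr, by simp⟩
    intro v h1 h2
    have hv := hsurj v h1 (by omega)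
    simp at hv
    rcases hv with hv | hv
    · omega
    · exact hv
  · rw [List.concat_eq_append] at *
    rcases r with _ | ⟨b, r'⟩
    · -- u = (l' ++ [a]) ++ [m+1]
      left
      refine ⟨l' ++ [a], condsOfSublist ⟨hc, h4, hb, hval, hsurj⟩
        (List.sublist_append_left _ _) (List.isChain_append.1 hc).1 ?_ hml, by simp⟩
      intro v h1 h2
      have hv := hsurj v h1 (by omega)
      simp at hv ⊢
      rcases hv with hv | hv | hv
      · exact Or.inl hv
      · exact Or.inr hv
      · omega
    · -- u = (l' ++ [a]) ++ (m+1) :: b :: r'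
      have heq : (l' ++ [a]) ++ (m+1) :: b :: r' = l' ++ a :: (m+1) :: b :: r' := by simp
      rw [heq] at hc h4 hb hval hsurj
      obtain ⟨hcl', hcr, hlink⟩ := List.isChain_append.1 hc
      have hana : a ≠ m + 1 := fun hh => hml (by simp [hh])
      have hbnb : b ≠ m + 1 := fun hh => hmr (by simp [hh])
      have hCond : CondsAux (m+1) (l' ++ a :: (m+1) :: b :: r') :=
        ⟨hc, h4, hb, hval, hsurj⟩
      by_cases hab : a = b
      · subst hab
        right
        have haval : 1 ≤ a ∧ a ≤ m + 1 := hval a (by simp)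
        have ham : a + 1 ≤ m := by
          by_contra hcon
          have hle := countLeOne (v := a) hc hb hval (by omega)
          have hs2 : [a, a] <+ l' ++ a :: (m+1) :: a :: r' := by
            have h1 : [a, a] <+ a :: (m+1) :: a :: r' :=
              (List.singleton_sublist.2 (by simp)).cons₂ a
            exact h1.trans (List.sublist_append_right l' _)
          have h2 : (2 : ℕ) ≤ (l' ++ a :: (m+1) :: a :: r').count a :=
            List.replicate_sublist_iff.1 (by simpa using hs2)
          omega
        refine ⟨l', a, r', heq.symm ▸ rfl, haval.1, ham, ?_⟩
        refine condsOfSublist hCond ?_ ?_ ?_ ?_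
        · -- sublist
          have h1 : a :: r' <+ a :: (m+1) :: a :: r' := by
            refine List.Sublist.cons₂ a ?_
            exact ((List.Sublist.refl r').cons a).cons (m+1)
          exact h1.append_left l'
        · -- chain'
          refine List.isChain_append.2 ⟨hcl', ?_, ?_⟩
          · exact hcr.tail.tail
          · intro x hx y hy
            simp at hy
            subst hy
            exact hlink x hx a (by simp)
        · -- membership
          intro v h1 h2
          have hv := hsurj v h1 (by omega)
          simp at hv ⊢
          rcases hv with hv | hv | hv | hv | hv
          · exact Or.inl hv
          · exact Or.inr (Or.inl hv)
          · omega
          · exact Or.inr (Or.inl hv)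
          · exact Or.inr (Or.inr hv)
        · -- m+1 not mem
          simp
          refine ⟨fun hh => hml (by simp [hh]), fun hh => hana hh.symm, fun hh => hmr (by simp [hh])⟩
      · left
        refine ⟨l' ++ a :: b :: r', condsOfSublist hCond ?_ ?_ ?_ ?_, by
          simp only [List.length_append, List.length_cons, List.length_nil]; omega⟩
        · have h1 : a :: b :: r' <+ a :: (m+1) :: b :: r' :=
            (((List.Sublist.refl (b :: r')).cons (m+1)).cons₂ a)
          exact h1.append_left l'
        · refine List.isChain_append.2 ⟨hcl', ?_, ?_⟩
          · exact List.isChain_cons_cons.2 ⟨hab, hcr.tail.tail⟩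
          · intro x hx y hy
            simp at hy
            subst hy
            exact hlink x hx a (by simp)
        · intro v h1 h2
          have hv := hsurj v h1 (by omega)
          simp at hv ⊢
          rcases hv with hv | hv | hv | hv | hv
          · exact Or.inl hv
          · exact Or.inr (Or.inl hv)
          · omega
          · exact Or.inr (Or.inr (Or.inl hv))
          · exact Or.inr (Or.inr (Or.inr hv))
        · simp
          refine ⟨fun hh => hml (by simp [hh]), fun hh => hana hh.symm,
            fun hh => hbnb hh.symm, fun hh => hmr (by simp [hh])⟩

lemma lengthBound : ∀ m : ℕ, 2 ≤ m → ∀ u : List ℕ, CondsAux m u → u.length ≤ 2 * m - 2 := by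
  intro m hm
  induction m, hm using Nat.le_induction with
  | base =>
    intro u h
    obtain ⟨hc, h4, hb, hval, hsurj⟩ := h
    by_contra hcon
    push_neg at hcon
    match u with
    | [] => simp at hcon
    | [x] => simp at hcon
    | [x, y] => simp at hcon
    | x :: y :: z :: t =>
      have hxy : x ≠ y := (List.isChain_cons_cons.1 hc).1
      have hyz : y ≠ z := (List.isChain_cons_cons.1 (List.isChain_cons_cons.1 hc).2).1
      have hx := hval x (by simp)
      have hy := hval y (by simp)
      have hz := hval z (by simp)
      have hxz : x = z := by omega
      subst hxz
      exact hb x y (by omega) (List.sublist_append_left [x, y, x] t)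
  | succ m hm ih =>
    intro u h
    rcases reduceAux (by omega) h with ⟨w, hw, hlw⟩ | ⟨l', a, r', hequ, h1a, ham, hw⟩
    · have := ih w hw
      omega
    · have h1 := ih _ hw
      have h2 : u.length = l'.length + 3 + r'.length := by
        rw [hequ]; simp only [List.length_append, List.length_cons, List.length_nil]; omega
      have h3 : (l' ++ a :: r').length = l'.length + 1 + r'.length := by
        simp only [List.length_append, List.length_cons, List.length_nil]; omega
      omega

lemma endpointsAux : ∀ m : ℕ, 2 ≤ m → ∀ u : List ℕ, CondsAux m u → u.length = 2 * m - 2 →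
    ((u.getD 0 0 = 1 ∧ u.getLast? = some 2) ∨ (u.getD 0 0 = 2 ∧ u.getLast? = some 1)) := by
  intro m hm
  induction m, hm using Nat.le_induction with
  | base =>
    intro u h hlen
    obtain ⟨hc, h4, hb, hval, hsurj⟩ := h
    match u with
    | [x, y] =>
      have hxy : x ≠ y := (List.isChain_cons_cons.1 hc).1
      have h1 : (1 : ℕ) ∈ [x, y] := hsurj 1 le_rfl (by omega)
      have h2 : (2 : ℕ) ∈ [x, y] := hsurj 2 (by omega) le_rfl
      simp at h1 h2 ⊢
      omega
  | succ m hm ih =>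
    intro u h hlen
    rcases reduceAux (by omega) h with ⟨w, hw, hlw⟩ | ⟨l', a, r', hequ, h1a, ham, hw⟩
    · have := lengthBound m hm w hw
      omega
    · subst hequ
      have hwlen : (l' ++ a :: r').length = 2 * m - 2 := by
        simp only [List.length_append, List.length_cons, List.length_nil] at hlen ⊢
        omega
      have hE := ih _ hw hwlen
      have h0 : (l' ++ a :: (m+1) :: a :: r').getD 0 0 = (l' ++ a :: r').getD 0 0 := by
        rcases l' with _ | ⟨c, cs⟩ <;> simp
      have hL : (l' ++ a :: (m+1) :: a :: r').getLast? = (l' ++ a :: r').getLast? := by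
        rcases r' with _ | ⟨c, cs⟩
        · have e1 : l' ++ a :: (m+1) :: a :: ([] : List ℕ) = (l' ++ [a, m+1]) ++ [a] := by simp
          have e2 : l' ++ a :: ([] : List ℕ) = l' ++ [a] := by simp
          rw [e1, e2, List.getLast?_concat, List.getLast?_concat]
        · have e1 : l' ++ a :: (m+1) :: a :: c :: cs = (l' ++ [a, m+1, a]) ++ c :: cs := by simp
          have e2 : l' ++ a :: c :: cs = (l' ++ [a]) ++ c :: cs := by simp
          rw [e1, e2, List.getLast?_append_of_ne_nil _ (by simp),
            List.getLast?_append_of_ne_nil _ (by simp)]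
      rw [h0, hL]
      exact hE

end StructAux

/-- structure of elements of C′ₙ for n ≥ 3: the value n occurs exactly once,
flanked on both sides by the same value r ≤ n−2, and u has the form (1,…,r,n,r,…,2) or
(2,…,r,n,r,…,1); in particular the first entry of u is 1 or 2. -/
theorem structure_of_C' (n : ℕ) (hn : 3 ≤ n) (u : List ℕ) (hu : MemC' n u) :
    u.count n = 1 ∧
    ∃ r ≤ n - 2, ∃ i : ℕ, 0 < i ∧ i + 1 < u.length ∧ u.getD i 0 = n ∧
      u.getD (i - 1) 0 = r ∧ u.getD (i + 1) 0 = r ∧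
      ((u.getD 0 0 = 1 ∧ u.getLast? = some 2) ∨ (u.getD 0 0 = 2 ∧ u.getLast? = some 1)) := by
  obtain ⟨⟨hlen, hnd, hsurjseq, h4⟩, hb⟩ := hu
  obtain ⟨hval0, hsurj0⟩ := hsurjseq
  have hval : ∀ x ∈ u, 1 ≤ x ∧ x ≤ n := fun x hx => by
    have := hval0 x hx; simpa [Finset.mem_Icc] using this
  have hsurj : ∀ v, 1 ≤ v → v ≤ n → v ∈ u := fun v h1 h2 =>
    hsurj0 v (Finset.mem_Icc.2 ⟨h1, h2⟩)
  have hcond : CondsAux n u := ⟨hnd, h4, hb, hval, hsurj⟩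
  have hlen' : u.length = 2 * n - 2 := by omega
  have hcount : u.count n = 1 := by
    have h1 := countLeOne (v := n) hnd hb hval (by omega)
    have h2 : 0 < u.count n := List.count_pos_iff.2 (hsurj n (by omega) le_rfl)
    omega
  obtain ⟨m, rfl⟩ : ∃ m, n = m + 1 := ⟨n - 1, by omega⟩
  have hE := endpointsAux (m+1) (by omega) u hcond hlen'
  rcases reduceAux (by omega) hcond with ⟨w, hw, hlw⟩ | ⟨l', a, r', hequ, h1a, ham, hw⟩
  · exfalso
    have := lengthBound m (by omega) w hw
    omega
  · refine ⟨hcount, a, by omega, l'.length + 1, by omega, ?_, ?_, ?_, ?_, hE⟩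
    · rw [hequ]; simp only [List.length_append, List.length_cons, List.length_nil]; omega
    · rw [hequ, List.getD_append_right _ _ _ _ (by omega)]
      have he : l'.length + 1 - l'.length = 1 := by omega
      rw [he]; simp
    · rw [hequ]
      have h0 : l'.length + 1 - 1 = l'.length := by omega
      rw [h0, List.getD_append_right _ _ _ _ (le_refl _)]
      simp
    · rw [hequ, List.getD_append_right _ _ _ _ (by omega)]
      have he : l'.length + 1 + 1 - l'.length = 2 := by omega
      rw [he]; simp
end

section
/- For any cactus u ∈ C(n)_k in which the value n occurs exactly once, say at position i, the identity u^□ − u^▪ = (−1)^k (1,2,1) ∘₁ u − u ∘ₙ (1,2,1) holds, where u^□ = Σ_{j<i} (−1)^{k+|u|_j} ů_j and u^▪ = −Σ_{j>i} (−1)^{k+|u|_j} ů_j. -/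
open Finsupp

section Aux

lemma reoccurs_cons_succ (a : ℕ) (t : List ℕ) (i : ℕ) :
    Reoccurs (a :: t) (i+1) = Reoccurs t i := rfl

lemma reoccurs_cons_zero (a : ℕ) (t : List ℕ) :
    Reoccurs (a :: t) 0 = t.contains a := rfl

lemma prefDeg_cons (a : ℕ) (t : List ℕ) (j : ℕ) :
    prefDeg (a :: t) (j+1) = (if a ∈ t then 1 else 0) + prefDeg t j := by
  unfold prefDeg
  rw [List.range_succ_eq_map, List.filter_cons]
  simp only [reoccurs_cons_zero, List.filter_map, Function.comp_def, reoccurs_cons_succ]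
  by_cases h : a ∈ t <;> simp [h, Nat.add_comm]

lemma prefDeg_length_eq_degOf (u : List ℕ) : prefDeg u u.length = degOf u := by
  induction u with
  | nil => rfl
  | cons a t ih =>
    rw [List.length_cons, prefDeg_cons, ih]
    unfold degOf
    by_cases h : a ∈ t
    · rw [List.dedup_cons_of_mem h]
      have := t.dedup_sublist.length_le
      simp only [h, if_true, List.length_cons]
      omega
    · rw [List.dedup_cons_of_notMem h]
      have := t.dedup_sublist.length_le
      simp only [h, if_false, List.length_cons]
      omega

lemma prefDeg_eq_segDeg (u : List ℕ) (j : ℕ) : prefDeg u j = segDeg u 0 j := by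
  unfold prefDeg segDeg
  rw [List.range_eq_range']
  rfl

lemma segDeg_add (u : List ℕ) {a b c : ℕ} (h1 : a ≤ b) (h2 : b ≤ c) :
    segDeg u a b + segDeg u b c = segDeg u a c := by
  unfold segDeg
  rw [← List.length_append, ← List.filter_append]
  congr 1
  have := List.range'_append_1 (s := a) (m := b - a) (n := c - b)
  rw [show a + (b-a) = b by omega] at this
  rw [this, show b - a + (c - b) = c - a by omega]

lemma reoccurs_ge (u : List ℕ) (i : ℕ) (h : u.length ≤ i + 1) : Reoccurs u i = false := by
  unfold Reoccurs
  rw [List.drop_eq_nil_of_le h]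
  rfl

lemma tPositions_cons (a x : ℕ) (t : List ℕ) :
    tPositions (a :: t) x = (if a = x then [0] else []) ++ (tPositions t x).map (· + 1) := by
  unfold tPositions
  rw [List.length_cons, List.range_succ_eq_map, List.filter_cons]
  simp only [List.filter_map, Function.comp_def]
  by_cases h : a = x <;> simp [h]

lemma tPositions_nil_of_not_mem {x : ℕ} {l : List ℕ} (h : x ∉ l) : tPositions l x = [] := by
  induction l with
  | nil => rfl
  | cons a t ih =>
    rw [tPositions_cons]
    simp only [List.mem_cons, not_or] at h
    rw [if_neg (Ne.symm h.1), ih h.2]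
    rfl

lemma tPositions_of_count_one {x : ℕ} {l : List ℕ} (h : l.count x = 1) :
    tPositions l x = [l.idxOf x] := by
  induction l with
  | nil => simp at h
  | cons a t ih =>
    rw [tPositions_cons]
    by_cases hax : a = x
    · subst hax
      rw [List.count_cons_self] at h
      have : a ∉ t := by
        intro hm
        have : 0 < t.count a := List.count_pos_iff.2 hm
        omega
      rw [if_pos rfl, tPositions_nil_of_not_mem this, List.idxOf_cons_self]
      rfl
    · rw [List.count_cons_of_ne hax] at h
      rw [if_neg hax, ih h, List.idxOf_cons_ne _ hax]
      simp [Nat.add_comm]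

lemma le_topVal {x : ℕ} {l : List ℕ} (h : x ∈ l) : x ≤ topVal l := by
  induction l with
  | nil => simp at h
  | cons a t ih =>
    rcases List.mem_cons.1 h with rfl | h'
    · exact le_max_left _ _
    · exact le_trans (ih h') (le_max_right _ _)

lemma topVal_le {n : ℕ} {l : List ℕ} (h : ∀ x ∈ l, x ≤ n) : topVal l ≤ n := by
  induction l with
  | nil => exact Nat.zero_le n
  | cons a t ih =>
    exact max_le (h a List.mem_cons_self) (ih fun x hx => h x (List.mem_cons_of_mem a hx))

lemma betaMap_eq_self {t nn : ℕ} {l : List ℕ} (h : ∀ x ∈ l, x < t) : betaMap t nn l = l := by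
  unfold betaMap
  rw [List.map_congr_left (g := id) (fun x hx => by simp [h x hx]), List.map_id]

lemma alphaMap_one (l : List ℕ) : alphaMap 1 l = l := by
  unfold alphaMap
  rw [List.map_congr_left (g := id) (fun x hx => by simp), List.map_id]

lemma ringIns_eq {u : List ℕ} {w j : ℕ} (h : j < u.length) :
    u.take (j+1) ++ [w] ++ u.drop j = ringIns u w j := by
  unfold ringIns
  rw [List.take_succ, List.getElem?_eq_getElem h, List.getD_eq_getElem u 0 h,
    List.drop_eq_getElem_cons h]
  simp only [List.append_assoc, List.cons_append, List.nil_append, Option.toList_some]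

lemma not_mem_parts {x : ℕ} {l : List ℕ} (h : l.count x = 1) :
    x ∉ l.take (l.idxOf x) ∧ x ∉ l.drop (l.idxOf x + 1) := by
  have hm : x ∈ l := List.count_pos_iff.1 (by omega)
  have hi : l.idxOf x < l.length := List.idxOf_lt_length_iff.2 hm
  have hd : l.drop (l.idxOf x) = x :: l.drop (l.idxOf x + 1) := by
    rw [List.drop_eq_getElem_cons hi, List.getElem_idxOf hi]
  have hc : l.count x = (l.take (l.idxOf x)).count x + ((x :: l.drop (l.idxOf x + 1)).count x) := by
    conv_lhs => rw [← l.take_append_drop (l.idxOf x)]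
    rw [List.count_append, hd]
  rw [List.count_cons_self, h] at hc
  constructor
  · exact List.count_eq_zero.1 (by omega)
  · exact List.count_eq_zero.1 (by omega)

lemma sym_one_eq (s : Finset ℕ) : s.sym 1 = s.image Sym.oneEquiv := by
  ext m
  obtain ⟨a, rfl⟩ := Sym.oneEquiv.surjective m
  simp only [Finset.mem_sym_iff, Finset.mem_image]
  constructor
  · intro h
    refine ⟨a, h a ?_, rfl⟩
    exact Multiset.mem_singleton_self a
  · rintro ⟨b, hb, hba⟩ c hc
    have hb' : b = a := Sym.oneEquiv.injective hba
    subst hb'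
    have : c = b := Multiset.mem_singleton.1 hc
    subst this
    exact hb

lemma sort_oneEquiv (a : ℕ) :
    Multiset.sort (Sym.oneEquiv a).1 (· ≤ ·) = [a] := by
  have : (Sym.oneEquiv a).1 = ({a} : Multiset ℕ) := rfl
  rw [this, Multiset.sort_singleton]

lemma signExp_left (u : List ℕ) (a : ℕ) :
    bfSignExp [1,2,1] u [1, a, u.length] [0, 2] = segDeg u 0 (a - 1) := by
  unfold bfSignExp
  simp only [show ([0,2] : List ℕ).length = 2 from rfl]
  rw [show (Finset.Icc 1 2 : Finset ℕ) = {1, 2} from rfl]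
  rw [Finset.sum_insert (by decide), Finset.sum_singleton]
  rw [show (Finset.Icc 1 2 : Finset ℕ) = {1, 2} from rfl,
    show (Finset.Icc 2 2 : Finset ℕ) = {2} from rfl]
  rw [Finset.sum_insert (by decide), Finset.sum_singleton, Finset.sum_singleton]
  norm_num
  rw [show segDeg [1,2,1] 0 2 = 1 from by decide, show segDeg [1,2,1] 2 2 = 0 from by decide]
  ring

lemma bfResult_left {u : List ℕ} {n a : ℕ} (hn : topVal u = n) (h1 : 1 ≤ a)
    (haL : a ≤ u.length) :
    bfResult [1,2,1] 1 u [1, a, u.length] [0, 2] = ringIns u (n+1) (a-1) := by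
  have hL : 1 ≤ u.length := le_trans h1 haL
  unfold bfResult vPiece
  rw [hn]
  norm_num
  rw [show List.range 2 = [0, 1] from rfl]
  simp only [List.flatMap_cons, List.flatMap_nil, List.append_nil]
  norm_num [alphaMap_one]
  rw [show betaMap 1 n [2] = [n+1] from by unfold betaMap; norm_num; omega]
  rw [show betaMap 1 n [] = [] from rfl]
  unfold blockSeg
  norm_num
  rw [show a - 1 + 1 = a by omega]
  rw [List.take_of_length_le (l := u.drop (a-1)) (by rw [List.length_drop]; omega)]
  rw [← ringIns_eq (by omega : a - 1 < u.length), show a - 1 + 1 = a by omega]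
  simp

lemma bfComp_left_eval {n : ℕ} {u : List ℕ} (htop : topVal u = n) (hL : 1 ≤ u.length) :
    bfComp [1,2,1] 1 u =
      ∑ j ∈ Finset.range u.length,
        ((-1 : ℤ) ^ prefDeg u j) • Finsupp.single (ringIns u (n + 1) j) 1 := by
  unfold bfComp
  rw [show tPositions [1,2,1] 1 = [0, 2] from rfl]
  rw [show ([0,2] : List ℕ).length - 1 = 1 from rfl]
  rw [sym_one_eq, Finset.sum_image (fun x _ y _ h => Sym.oneEquiv.injective h)]
  refine Finset.sum_nbij' (i := fun a => a - 1) (j := fun j => j + 1) ?_ ?_ ?_ ?_ ?_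
  · intro a ha
    rw [Finset.mem_Icc] at ha
    rw [Finset.mem_range]
    omega
  · intro j hj
    rw [Finset.mem_range] at hj
    rw [Finset.mem_Icc]
    omega
  · intro a ha
    rw [Finset.mem_Icc] at ha
    omega
  · intro j hj
    omega
  · intro a ha
    rw [Finset.mem_Icc] at ha
    rw [sort_oneEquiv]
    simp only [List.cons_append, List.nil_append]
    rw [signExp_left, bfResult_left htop ha.1 ha.2, prefDeg_eq_segDeg]

lemma signExp_right (u : List ℕ) (i₀ : ℕ) :
    bfSignExp u [1,2,1] [1, 3] [i₀] = segDeg u i₀ (u.length - 1) := by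
  unfold bfSignExp
  simp only [show ([i₀] : List ℕ).length = 1 from rfl]
  rw [show (Finset.Icc 1 1 : Finset ℕ) = {1} from rfl, Finset.sum_singleton,
    show (Finset.Icc 1 1 : Finset ℕ) = {1} from rfl, Finset.sum_singleton]
  norm_num
  rw [show segDeg [1,2,1] 0 2 = 1 from by decide]
  ring

lemma bfResult_right {n : ℕ} {u : List ℕ} (hc : u.count n = 1)
    (hb : ∀ x ∈ u, x ≤ n) :
    bfResult u n [1,2,1] [1, 3] [u.idxOf n] = ringIns u (n+1) (u.idxOf n) := by
  have hm : n ∈ u := List.count_pos_iff.1 (by omega)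
  have hi : u.idxOf n < u.length := List.idxOf_lt_length_iff.2 hm
  have hnm := not_mem_parts hc
  have htk : ∀ x ∈ u.take (u.idxOf n), x < n := by
    intro x hx
    have hxu : x ∈ u := (List.take_sublist _ _).mem hx
    have : x ≠ n := fun h => hnm.1 (h ▸ hx)
    exact lt_of_le_of_ne (hb x hxu) this
  have hdr : ∀ x ∈ u.drop (u.idxOf n + 1), x < n := by
    intro x hx
    have hxu : x ∈ u := (List.drop_sublist _ _).mem hx
    have : x ≠ n := fun h => hnm.2 (h ▸ hx)
    exact lt_of_le_of_ne (hb x hxu) this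
  unfold bfResult vPiece
  rw [show topVal [1,2,1] = 2 from rfl]
  norm_num
  rw [betaMap_eq_self htk, betaMap_eq_self hdr]
  rw [show blockSeg [1,2,1] 1 3 = [1,2,1] from rfl]
  rw [show alphaMap n [1,2,1] = [n, n+1, n] from by unfold alphaMap; norm_num; omega]
  unfold ringIns
  rw [List.getD_eq_getElem u 0 hi, List.getElem_idxOf hi]
  simp

lemma bfComp_right_eval {n : ℕ} {u : List ℕ} (hc : u.count n = 1)
    (hb : ∀ x ∈ u, x ≤ n) :
    bfComp u n [1, 2, 1] =
      ((-1 : ℤ) ^ segDeg u (u.idxOf n) (u.length - 1)) •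
        Finsupp.single (ringIns u (n + 1) (u.idxOf n)) 1 := by
  unfold bfComp
  rw [tPositions_of_count_one hc]
  rw [show ([u.idxOf n] : List ℕ).length - 1 = 0 from rfl]
  rw [Finset.sym_zero, Finset.sum_singleton]
  simp only [show (∅ : Sym ℕ 0).1 = (0 : Multiset ℕ) from rfl, Multiset.sort_zero]
  simp only [show ([1,2,1] : List ℕ).length = 3 from rfl, List.nil_append]
  rw [signExp_right, bfResult_right hc hb]

end Aux

/-- for any cactus u ∈ C(n)_k in which n occurs exactly once,
u^□ − u^▪ = (−1)^k (1,2,1) ∘₁ u − u ∘ₙ (1,2,1). -/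
theorem sq_sub_bl_eq_brace_comm (n k : ℕ) (u : List ℕ)
    (hu : IsCactus n k u) (hn : u.count n = 1) :
    sqList u - blList u =
      ((-1 : ℤ) ^ k) • bfComp [1, 2, 1] 1 u - bfComp u n [1, 2, 1] := by
  obtain ⟨hlen, hnd, hsurj, hij⟩ := hu
  have hmem : n ∈ u := List.count_pos_iff.1 (by omega)
  have hn1 : 1 ≤ n := (Finset.mem_Icc.1 (hsurj.1 n hmem)).1
  have hb : ∀ x ∈ u, x ≤ n := fun x hx => (Finset.mem_Icc.1 (hsurj.1 x hx)).2
  have htop : topVal u = n := le_antisymm (topVal_le hb) (le_topVal hmem)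
  have hi₀ : u.idxOf n < u.length := List.idxOf_lt_length_iff.2 hmem
  have htf : u.toFinset = Finset.Icc 1 n := by
    ext x
    simp only [List.mem_toFinset]
    exact ⟨fun h => hsurj.1 x h, fun h => hsurj.2 x h⟩
  have hded : u.dedup.length = n := by
    rw [← List.card_toFinset, htf, Nat.card_Icc]
    omega
  have hdeg : degOf u = k := by
    unfold degOf
    rw [hded, hlen]
    omega
  have hL1 : 1 ≤ u.length := by omega
  have hlast : segDeg u (u.length - 1) u.length = 0 := by
    unfold segDeg
    rw [show u.length - (u.length - 1) = 1 by omega]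
    rw [List.range'_one]
    simp [List.filter_cons, reoccurs_ge u (u.length - 1) (by omega)]
  have hsum1 : segDeg u 0 (u.idxOf n) + segDeg u (u.idxOf n) u.length = segDeg u 0 u.length :=
    segDeg_add u (Nat.zero_le _) (le_of_lt hi₀)
  have hsum2 : segDeg u (u.idxOf n) (u.length - 1) + segDeg u (u.length - 1) u.length
      = segDeg u (u.idxOf n) u.length := segDeg_add u (by omega) (by omega)
  have htot : segDeg u 0 u.length = k := by
    rw [← prefDeg_eq_segDeg, prefDeg_length_eq_degOf, hdeg]
  have hsplit : prefDeg u (u.idxOf n) + segDeg u (u.idxOf n) (u.length - 1) = k := by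
    rw [prefDeg_eq_segDeg]
    omega
  rw [bfComp_left_eval htop hL1, bfComp_right_eval hn hb]
  unfold sqList blList
  rw [htop, hdeg]
  rw [sub_neg_eq_add]
  rw [Finset.smul_sum]
  have hco : ∀ j : ℕ, ((-1 : ℤ) ^ k) • (((-1 : ℤ) ^ prefDeg u j) •
      Finsupp.single (ringIns u (n + 1) j) (1 : ℤ)) =
      ((-1 : ℤ) ^ (k + prefDeg u j)) • Finsupp.single (ringIns u (n + 1) j) (1 : ℤ) := by
    intro j
    rw [smul_smul, ← pow_add]
  simp only [hco]
  have hsplitsum : ∑ j ∈ Finset.range u.length,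
      ((-1 : ℤ) ^ (k + prefDeg u j)) • Finsupp.single (ringIns u (n + 1) j) (1 : ℤ)
      = (∑ j ∈ Finset.range (u.idxOf n),
          ((-1 : ℤ) ^ (k + prefDeg u j)) • Finsupp.single (ringIns u (n + 1) j) (1 : ℤ))
        + (((-1 : ℤ) ^ (k + prefDeg u (u.idxOf n))) •
            Finsupp.single (ringIns u (n + 1) (u.idxOf n)) (1 : ℤ)
        + ∑ j ∈ Finset.Ico (u.idxOf n + 1) u.length,
          ((-1 : ℤ) ^ (k + prefDeg u j)) • Finsupp.single (ringIns u (n + 1) j) (1 : ℤ)) := by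
    rw [Finset.range_eq_Ico,
      ← Finset.sum_Ico_consecutive _ (Nat.zero_le (u.idxOf n)) (le_of_lt hi₀),
      Finset.sum_eq_sum_Ico_succ_bot hi₀, ← Finset.range_eq_Ico]
  rw [hsplitsum]
  have hpar : ((-1 : ℤ) ^ (k + prefDeg u (u.idxOf n)))
      = ((-1 : ℤ) ^ segDeg u (u.idxOf n) (u.length - 1)) := by
    rw [show k + prefDeg u (u.idxOf n)
        = segDeg u (u.idxOf n) (u.length - 1) + 2 * prefDeg u (u.idxOf n) by omega,
      pow_add, pow_mul]
    simp
  rw [hpar]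
  abel
end

section
/- If u ∈ C(n)_k is a cactus with no (i,j,i)-subsequence with j=i+1 or j<i, in which the value n occurs exactly once, then every term ů_j of u^□ and of u^▪ is again a cactus (no (a,b,a,b) subsequence) with no (i,j,i)-subsequence with j=i+1 or j<i; conversely every element of C′_{n+1} arises as such a term ů_j for a unique u ∈ C′_n and position j. -/
open Finsupp

namespace RingProofAux
open List

lemma pair_sublist {l : List ℕ} {i j x : ℕ} (hij : i < j) (hj : j < l.length)
    (hx : l[i]'(lt_trans hij hj) = x) (hy : l[j] = x) : [x, x] <+ l := by
  have h1 : [x] <+ l.take j := by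
    apply List.singleton_sublist.mpr
    have hi' : i < (l.take j).length := by simp [List.length_take]; omega
    have h2 : (l.take j)[i]'hi' = l[i]'(lt_trans hij hj) := List.getElem_take
    rw [← hx, ← h2]; exact List.getElem_mem _
  have h2 : [x] <+ l.drop j := by
    rw [List.drop_eq_getElem_cons hj, hy]
    exact (List.singleton_sublist).mpr List.mem_cons_self
  have := h1.append h2
  simpa [List.take_append_drop] using this

lemma sublist_dedup {P A B : List ℕ} {c : ℕ}
    (hP : P.Chain' (· ≠ ·)) (h : P <+ A ++ [c, c] ++ B) : P <+ A ++ [c] ++ B := by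
  rw [List.append_assoc, List.sublist_append_iff] at h
  obtain ⟨P₁, P₂₃, rfl, h1, h23⟩ := h
  rw [List.sublist_append_iff] at h23
  obtain ⟨P₂, P₃, rfl, h2, h3⟩ := h23
  have hP2 : P₂ <+ [c] := by
    rcases Nat.lt_or_ge P₂.length 2 with hl | hl
    · have hmem : ∀ x ∈ P₂, x = c := by
        intro x hx
        have := h2.subset hx; simpa using this
      match P₂, hmem, hl with
      | [], _, _ => exact List.nil_sublist _
      | [y], hmem, _ =>
        have hy : y = c := hmem y (List.mem_singleton_self y)
        rw [hy]
      | y :: z :: t, _, hl => exact absurd hl (by simp)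
    · have hlen : P₂.length = 2 := le_antisymm (by simpa using h2.length_le) hl
      have h4 : P₂ = [c, c] := h2.eq_of_length (by simpa using hlen)
      subst h4
      exfalso
      have : ([c, c] : List ℕ).Chain' (· ≠ ·) := hP.infix ⟨P₁, P₃, by simp⟩
      simp [List.Chain', List.isChain_cons_cons] at this
  rw [List.append_assoc]
  exact h1.append (hP2.append h3)

lemma sublist_remove {P A B : List ℕ} {c w : ℕ} (hw : w ∉ P)
    (hA : ∀ x ∈ A, x ≠ w) (hB : ∀ x ∈ B, x ≠ w) (hc : c ≠ w)
    (h : P <+ A ++ [c, w, c] ++ B) : P <+ A ++ [c, c] ++ B := by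
  have h1 : P.filter (fun x => !(x == w)) = P := by
    apply List.filter_eq_self.mpr
    intro x hx; simp only [Bool.not_eq_true', beq_eq_false_iff_ne, ne_eq]
    rintro rfl; exact hw hx
  have h2 := h.filter (fun x => !(x == w))
  rw [h1] at h2
  have e1 : A.filter (fun x => !(x == w)) = A :=
    List.filter_eq_self.mpr (by intro x hx; simpa using hA x hx)
  have e2 : B.filter (fun x => !(x == w)) = B :=
    List.filter_eq_self.mpr (by intro x hx; simpa using hB x hx)
  have e3 : ([c, w, c] : List ℕ).filter (fun x => !(x == w)) = [c, c] := by
    have : (c == w) = false := beq_eq_false_iff_ne.mpr hc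
    simp [List.filter_cons, this]
  have h3 : (A ++ [c, w, c] ++ B).filter (fun x => !(x == w)) = A ++ [c, c] ++ B := by
    rw [List.filter_append, List.filter_append, e1, e2, e3]
  rwa [h3] at h2

lemma count_top_le_one {w : List ℕ} {M : ℕ} (hnd : Nondeg w) (hbad : NoBadIJI w)
    (hle : ∀ x ∈ w, x ≤ M) : w.count M ≤ 1 := by
  by_contra hcon
  push_neg at hcon
  have hdup : [M, M] <+ w := List.duplicate_iff_sublist.mp
    (List.duplicate_iff_two_le_count.mpr hcon)
  rw [List.cons_sublist_iff] at hdup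
  obtain ⟨r₁, r₂, rfl, hm1, hm2⟩ := hdup
  rw [List.singleton_sublist] at hm2
  obtain ⟨w₁, w₁', rfl⟩ := List.append_of_mem hm1
  obtain ⟨w₃, w₄, rfl⟩ := List.append_of_mem hm2
  have hw : w₁ ++ M :: w₁' ++ (w₃ ++ M :: w₄)
      = w₁ ++ M :: ((w₁' ++ w₃) ++ M :: w₄) := by simp
  rw [hw] at hnd hbad hle
  rcases hmid : w₁' ++ w₃ with _ | ⟨x, mid'⟩
  · rw [hmid] at hnd
    have hMM : ([M, M] : List ℕ).Chain' (· ≠ ·) :=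
      List.IsChain.infix hnd ⟨w₁, w₄, by simp⟩
    simp [List.Chain'] at hMM
  · rw [hmid] at hnd hbad hle
    have hxM : x ≠ M := by
      have h5 : ([M, x] : List ℕ).Chain' (· ≠ ·) :=
        List.IsChain.infix hnd ⟨w₁, mid' ++ M :: w₄, by simp⟩
      simp [List.Chain'] at h5
      exact fun hEq => h5 hEq.symm
    have hxle : x < M :=
      lt_of_le_of_ne (hle x (by simp)) hxM
    have hin : [M, x, M] <+ M :: (x :: mid' ++ M :: w₄) := by
      refine List.Sublist.cons₂ _ (List.Sublist.cons₂ _ ?_)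
      exact List.singleton_sublist.mpr (by simp)
    exact hbad M x (Or.inr hxle) (hin.trans (List.sublist_append_right w₁ _))

lemma noijij_sublist {u v : List ℕ} (h : NoIJIJ v) (hs : u <+ v) : NoIJIJ u :=
  fun i j hij hsl => h i j hij (hsl.trans hs)

lemma nobad_sublist {u v : List ℕ} (h : NoBadIJI v) (hs : u <+ v) : NoBadIJI u :=
  fun i j hij hsl => h i j hij (hsl.trans hs)

/-- Maximal length of a nondegenerate no-ijij no-bad-iji surjection onto {1,…,M}. -/
lemma surj_length_le : ∀ M : ℕ, ∀ w : List ℕ, Nondeg w → NoIJIJ w → NoBadIJI w →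
    IsSurjSeq M w → w.length ≤ max 1 (2 * M - 2) := by
  intro M
  induction M using Nat.strong_induction_on with
  | _ M IH =>
  intro w hnd hij hbad hsurj
  match M with
  | 0 =>
    have : w = [] := by
      cases w with
      | nil => rfl
      | cons a t =>
        have := hsurj.1 a (by simp)
        simp at this
    simp [this]
  | 1 =>
    match w with
    | [] => simp
    | [a] => simp
    | a :: b :: t =>
      have ha := hsurj.1 a (by simp)
      have hb := hsurj.1 b (by simp)
      simp [Finset.mem_Icc] at ha hb
      have : a ≠ b := (List.isChain_cons_cons.mp hnd).1
      omega
  | 2 =>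
    match w with
    | [] => simp
    | [a] => simp
    | [a, b] => simp
    | a :: b :: c :: t =>
      exfalso
      have ha := hsurj.1 a (by simp)
      have hb := hsurj.1 b (by simp)
      have hc := hsurj.1 c (by simp)
      simp [Finset.mem_Icc] at ha hb hc
      have h1 : a ≠ b := (List.isChain_cons_cons.mp hnd).1
      have h2 : b ≠ c := (List.isChain_cons_cons.mp (List.isChain_cons_cons.mp hnd).2).1
      have hac : a = c := by omega
      subst hac
      have hsl : [a, b, a] <+ a :: b :: a :: t :=
        List.Sublist.cons₂ _ (List.Sublist.cons₂ _ (List.Sublist.cons₂ _ (List.nil_sublist _)))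
      rcases Nat.lt_or_ge a b with h | h
      · exact hbad a b (Or.inl (by omega)) hsl
      · exact hbad a b (Or.inr (by omega)) hsl
  | (m+3) =>
    set M := m + 3 with hM
    -- the top value occurs exactly once
    have hMmem : M ∈ w := hsurj.2 M (by simp [Finset.mem_Icc]; omega)
    have hle : ∀ x ∈ w, x ≤ M := fun x hx => (Finset.mem_Icc.mp (hsurj.1 x hx)).2
    have hcount : w.count M = 1 :=
      le_antisymm (count_top_le_one hnd hbad hle) (List.count_pos_iff.mpr hMmem)
    obtain ⟨A, B, rfl⟩ := List.append_of_mem hMmem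
    have hcA : A.count M = 0 ∧ B.count M = 0 := by
      rw [List.count_append, List.count_cons] at hcount
      simp at hcount; omega
    have hMA : M ∉ A := List.count_eq_zero.mp hcA.1
    have hMB : M ∉ B := List.count_eq_zero.mp hcA.2
    -- values of A, B lie in Icc 1 (M-1)
    have hval : ∀ x, (x ∈ A ∨ x ∈ B) → x ∈ Finset.Icc 1 (m + 2) := by
      intro x hx
      have hxw : x ∈ A ++ M :: B := by
        rcases hx with h | h
        · exact List.mem_append_left _ h
        · exact List.mem_append_right _ (List.mem_cons_of_mem _ h)
      have h1 := Finset.mem_Icc.mp (hsurj.1 x hxw)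
      have hxM : x ≠ M := by rintro rfl; rcases hx with h | h; exacts [hMA h, hMB h]
      simp [Finset.mem_Icc]; omega
    have hvalr : ∀ x ∈ Finset.Icc 1 (m+2), x ∈ A ∨ x ∈ B := by
      intro x hx
      have hxw := hsurj.2 x (by simp [Finset.mem_Icc] at hx ⊢; omega)
      rcases List.mem_append.mp hxw with h | h
      · exact Or.inl h
      · rcases List.mem_cons.mp h with rfl | h
        · exfalso; simp [Finset.mem_Icc] at hx; omega
        · exact Or.inr h
    have hIH := IH (m + 2) (by omega)
    -- helper to finish from a merged word
    have hfin : ∀ w' : List ℕ, Nondeg w' → w' <+ A ++ M :: B →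
        (∀ x, (x ∈ A ∨ x ∈ B) → x ∈ w') → (∀ x ∈ w', x ∈ A ∨ x ∈ B) →
        w'.length ≤ 2 * (m + 2) - 2 := by
      intro w' hnd' hsub hmem1 hmem2
      have := hIH w' hnd' (noijij_sublist hij hsub) (nobad_sublist hbad hsub)
        ⟨fun x hx => hval x (hmem2 x hx), fun x hx => hmem1 x (hvalr x hx)⟩
      omega
    rcases B with _ | ⟨b, B₀⟩
    · -- B empty
      have h1 : A <+ A ++ [M] := List.sublist_append_left _ _
      have hbound := hfin A (hnd.prefix ⟨[M], by simp⟩) (by simpa using h1)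
        (by rintro x (h | h); exact h; simp at h) (fun x hx => Or.inl hx)
      simp only [List.length_append, List.length_cons, List.length_nil]
      omega
    · rcases List.eq_nil_or_concat A with rfl | ⟨A₀, a, rfl⟩
      · -- A empty
        have h1 : b :: B₀ <+ [] ++ M :: b :: B₀ := List.sublist_cons_self _ _
        have hbound := hfin (b :: B₀) (by
            have : Nondeg (M :: b :: B₀) := by simpa [Nondeg] using hnd
            exact (List.isChain_cons_cons.mp this).2) h1
          (by rintro x (h | h); simp at h; exact h) (fun x hx => Or.inr hx)
        simp only [List.nil_append, List.length_cons] at *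
        omega
      · rw [List.concat_eq_append] at *
        by_cases hab : a = b
        · -- merge case
          subst hab
          have hsub : (A₀ ++ [a]) ++ B₀ <+ (A₀ ++ [a]) ++ M :: a :: B₀ := by
            apply (List.append_sublist_append_left _).mpr
            exact (List.sublist_cons_self _ _).trans (List.sublist_cons_self _ _)
          have hndw : Nondeg ((A₀ ++ [a]) ++ B₀) := by
            have h0 : Chain' (· ≠ ·) ((A₀ ++ [a]) ++ M :: a :: B₀) := hnd
            rw [List.Chain', List.isChain_append] at h0
            obtain ⟨hA', hMB', hlast⟩ := h0
            rw [Nondeg, List.Chain', List.isChain_append]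
            refine ⟨hA', ?_, ?_⟩
            · exact (List.isChain_cons.mp (List.isChain_cons_cons.mp hMB').2).2
            · intro x hx y hy
              have hx' : a = x := by
                rw [List.getLast?_concat] at hx; simpa using hx
              subst hx'
              exact (List.isChain_cons.mp (List.isChain_cons_cons.mp hMB').2).1 y hy
          have hbound := hfin ((A₀ ++ [a]) ++ B₀) hndw hsub
            (by
              rintro x (h | h)
              · exact List.mem_append_left _ h
              · rcases List.mem_cons.mp h with rfl | h
                · exact List.mem_append_left _ (by simp)
                · exact List.mem_append_right _ h)
            (by
              intro x hx
              rcases List.mem_append.mp hx with h | h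
              · exact Or.inl h
              · exact Or.inr (List.mem_cons_of_mem _ h))
          simp only [List.length_append, List.length_cons] at *
          omega
        · -- no merge
          have hsub : (A₀ ++ [a]) ++ b :: B₀ <+ (A₀ ++ [a]) ++ M :: b :: B₀ := by
            apply (List.append_sublist_append_left _).mpr
            exact List.sublist_cons_self _ _
          have hndw : Nondeg ((A₀ ++ [a]) ++ b :: B₀) := by
            have h0 : Chain' (· ≠ ·) ((A₀ ++ [a]) ++ M :: b :: B₀) := hnd
            rw [List.Chain', List.isChain_append] at h0
            obtain ⟨hA', hMB', _⟩ := h0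
            rw [Nondeg, List.Chain', List.isChain_append]
            refine ⟨hA', (List.isChain_cons_cons.mp hMB').2, ?_⟩
            intro x hx y hy
            have hx' : a = x := by rw [List.getLast?_concat] at hx; simpa using hx
            have hy' : b = y := by simpa using hy
            subst hx'; subst hy'
            exact hab
          have hbound := hfin ((A₀ ++ [a]) ++ b :: B₀) hndw hsub
            (by
              rintro x (h | h)
              · exact List.mem_append_left _ h
              · exact List.mem_append_right _ h)
            (by
              intro x hx
              rcases List.mem_append.mp hx with h | h
              · exact Or.inl h
              · exact Or.inr h)
          simp only [List.length_append, List.length_cons] at *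
          omega

lemma append_singleton_eq {x : ℕ} : ∀ {A₁ : List ℕ} {A₂ B₁ B₂ : List ℕ},
    A₁ ++ x :: B₁ = A₂ ++ x :: B₂ → x ∉ A₁ → x ∉ A₂ → A₁ = A₂ ∧ B₁ = B₂ := by
  intro A₁
  induction A₁ with
  | nil =>
    intro A₂ B₁ B₂ h h1 h2
    cases A₂ with
    | nil => simpa using h
    | cons y t =>
      exfalso
      simp at h
      exact h2 (by simp [h.1])
  | cons y t IHt =>
    intro A₂ B₁ B₂ h h1 h2
    cases A₂ with
    | nil =>
      exfalso
      simp at h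
      exact h1 (by simp [h.1])
    | cons z t₂ =>
      simp at h
      obtain ⟨rfl, h⟩ := h
      have := IHt h (fun hm => h1 (by simp [hm])) (fun hm => h2 (by simp [hm]))
      simp [this.1, this.2]



lemma getD_eq {u : List ℕ} {j : ℕ} (h : j < u.length) : u.getD j 0 = u[j] :=
  List.getD_eq_getElem u 0 h

theorem part1 : ∀ n k : ℕ, ∀ u : List ℕ, IsCactus n k u → NoBadIJI u → u.count n = 1 →
    ∀ j : ℕ, j < u.length → j ≠ u.idxOf n →
      IsCactus (n + 1) (k + 1) (ringIns u (n + 1) j) ∧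
      NoBadIJI (ringIns u (n + 1) j) := by
  intro n k u hc hbad hcount j hjlen hjne
  obtain ⟨hlen, hnd, hsurj, hij⟩ := hc
  set A := u.take j with hA
  set B := u.drop (j + 1) with hB
  set c := u.getD j 0 with hcdef
  have hcget : c = u[j] := getD_eq hjlen
  have hu : u = A ++ c :: B := by
    rw [hA, hB, hcdef, getD_eq hjlen, ← List.drop_eq_getElem_cons hjlen,
      List.take_append_drop]
  have hv : ringIns u (n + 1) j = A ++ [c, n + 1, c] ++ B := rfl
  -- basic facts
  have hcu : c ∈ u := by rw [hu]; simp
  have hcIcc := Finset.mem_Icc.mp (hsurj.1 c hcu)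
  have hn1 : 1 ≤ n := le_trans hcIcc.1 hcIcc.2
  have hnu : n ∈ u := List.count_pos_iff.mp (by omega)
  have hidx : u.idxOf n < u.length := List.idxOf_lt_length_iff.mpr hnu
  have hidxval : u[u.idxOf n] = n := List.getElem_idxOf hidx
  have hcne : c ≠ n := by
    intro hEq
    have h2 : (2 : ℕ) ≤ u.count n := by
      rcases Nat.lt_or_ge j (u.idxOf n) with h | h
      · exact le_trans (by norm_num)
          ((pair_sublist h hidx (by rw [← hcget, hEq]) hidxval).count_le n)
      · have h' : u.idxOf n < j := lt_of_le_of_ne h (Ne.symm hjne)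
        exact le_trans (by norm_num)
          ((pair_sublist h' hjlen hidxval (by rw [← hcget, hEq])).count_le n)
    omega
  have huval : ∀ x ∈ u, x ≠ n + 1 := by
    intro x hx
    have := Finset.mem_Icc.mp (hsurj.1 x hx)
    omega
  have hAval : ∀ x ∈ A, x ≠ n + 1 := fun x hx => huval x (by rw [hu]; simp [hx])
  have hBval : ∀ x ∈ B, x ≠ n + 1 := fun x hx => huval x (by rw [hu]; simp [hx])
  have hcval : c ≠ n + 1 := huval c hcu
  have husub : u <+ ringIns u (n + 1) j := by
    rw [hv, hu]
    have : A ++ [c] ++ B <+ A ++ [c, n+1, c] ++ B := by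
      refine List.Sublist.append (List.Sublist.append (List.Sublist.refl _) ?_)
        (List.Sublist.refl _)
      exact (List.sublist_cons_self _ _).trans
        ((List.sublist_cons_self _ _).cons₂ c)
    simpa using this
  -- counts in the new word
  have hAn1 : A.count (n+1) = 0 := List.count_eq_zero.mpr (fun h => hAval _ h rfl)
  have hBn1 : B.count (n+1) = 0 := List.count_eq_zero.mpr (fun h => hBval _ h rfl)
  have hcntn1 : (ringIns u (n + 1) j).count (n + 1) = 1 := by
    rw [hv]
    rw [List.count_append, List.count_append, hAn1, hBn1]
    have h9 : (c == n + 1) = false := beq_eq_false_iff_ne.mpr hcval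
    simp [List.count_cons, h9]
  have hcntn : (ringIns u (n + 1) j).count n = 1 := by
    have h8 : (c == n) = false := beq_eq_false_iff_ne.mpr hcne
    have h9 : ((n + 1 : ℕ) == n) = false := beq_eq_false_iff_ne.mpr (by omega)
    have h7 : u.count n = A.count n + B.count n := by
      rw [hu]
      simp [List.count_append, List.count_cons, h8]
    rw [hv, List.count_append, List.count_append]
    have h6 : List.count n [c, n+1, c] = 0 := by simp [List.count_cons, h8, h9]
    rw [h6]
    rw [h7] at hcount
    omega
  -- pattern descent
  have hdescend : ∀ P : List ℕ, P.Chain' (· ≠ ·) → (n + 1) ∉ P →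
      P <+ ringIns u (n + 1) j → P <+ u := by
    intro P hch hnp h
    rw [hv] at h
    have h2 := sublist_remove hnp hAval hBval hcval h
    have h3 := sublist_dedup hch h2
    rw [hu]; simpa using h3
  constructor
  · refine ⟨?_, ?_, ?_, ?_⟩
    · -- length
      rw [hv]
      simp only [List.length_append, List.length_cons, List.length_nil, hA, hB,
        List.length_take, List.length_drop]
      omega
    · -- nondegenerate
      rw [hv, Nondeg, List.append_assoc, List.Chain', List.isChain_append]
      rw [hu, Nondeg, List.Chain', List.isChain_append] at hnd
      obtain ⟨h1, h2, h3⟩ := hnd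
      refine ⟨h1, ?_, ?_⟩
      · have h4 := List.isChain_cons.mp h2
        refine List.isChain_cons_cons.mpr ⟨fun h => hcval h, List.isChain_cons_cons.mpr
          ⟨fun h => hcval h.symm, List.isChain_cons.mpr h4⟩⟩
      · intro x hx y hy
        exact h3 x hx y (by simpa using hy)
    · -- surjectivity
      constructor
      · intro x hx
        rw [hv] at hx
        simp only [List.mem_append, List.mem_cons] at hx
        have hx' : x ∈ u ∨ x = n + 1 := by
          rcases hx with (h | h) | h
          · exact Or.inl (by rw [hu]; simp [h])
          · rcases h with rfl | rfl | rfl | h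
            · exact Or.inl hcu
            · exact Or.inr rfl
            · exact Or.inl hcu
            · simp at h
          · exact Or.inl (by rw [hu]; simp [h])
        rcases hx' with h | rfl
        · have := Finset.mem_Icc.mp (hsurj.1 x h)
          simp [Finset.mem_Icc]; omega
        · simp [Finset.mem_Icc]
      · intro x hx
        simp only [Finset.mem_Icc] at hx
        rcases Nat.lt_or_ge x (n + 1) with h | h
        · exact husub.subset (hsurj.2 x (by simp [Finset.mem_Icc]; omega))
        · have : x = n + 1 := by omega
          subst this
          rw [hv]; simp
    · -- no ijij
      intro a b hab hsl
      by_cases ha : a = n + 1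
      · subst ha
        have := hsl.count_le (n + 1)
        rw [hcntn1] at this
        simp [List.count_cons, hab, Ne.symm hab] at this
      by_cases hb : b = n + 1
      · subst hb
        have := hsl.count_le (n + 1)
        rw [hcntn1] at this
        simp [List.count_cons, hab, Ne.symm hab] at this
      · refine hij a b hab (hdescend _ ?_ ?_ hsl)
        · simp [List.Chain', List.isChain_cons_cons, hab, Ne.symm hab]
        · simp only [List.mem_cons, not_or]
          exact ⟨fun h => ha h.symm, fun h => hb h.symm, fun h => ha h.symm,
            fun h => hb h.symm, by simp⟩
  · -- no bad iji
    intro a b hcond hsl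
    have hab : a ≠ b := by omega
    by_cases ha : a = n + 1
    · subst ha
      have := hsl.count_le (n + 1)
      rw [hcntn1] at this
      simp [List.count_cons, hab, Ne.symm hab] at this
    by_cases hb : b = n + 1
    · subst hb
      have hav : a ∈ ringIns u (n+1) j := hsl.subset (by simp)
      have hau : a ∈ u := by
        rw [hv] at hav
        simp only [List.mem_append, List.mem_cons] at hav
        rcases hav with (h | h) | h
        · rw [hu]; simp [h]
        · rcases h with rfl | rfl | rfl | h
          · exact hcu
          · exact absurd rfl ha
          · exact hcu
          · simp at h
        · rw [hu]; simp [h]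
      have haIcc := Finset.mem_Icc.mp (hsurj.1 a hau)
      have han : a = n := by omega
      rw [han] at hsl
      have := hsl.count_le n
      rw [hcntn] at this
      simp [List.count_cons, (by omega : ¬ (n + 1 = n))] at this
    · refine hbad a b hcond (hdescend _ ?_ ?_ hsl)
      · simp [List.Chain', List.isChain_cons_cons, hab, Ne.symm hab]
      · simp only [List.mem_cons, not_or]
        exact ⟨fun h => ha h.symm, fun h => hb h.symm, fun h => ha h.symm, by simp⟩



theorem part2 : ∀ n : ℕ, 2 ≤ n → ∀ v : List ℕ, MemC' (n + 1) v →
    ∃! uj : List ℕ × ℕ, MemC' n uj.1 ∧ uj.2 < uj.1.length ∧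
      uj.2 ≠ uj.1.idxOf n ∧ ringIns uj.1 (n + 1) uj.2 = v := by
  intro n hn v hv
  obtain ⟨⟨hlen, hnd, hsurj, hij⟩, hbad⟩ := hv
  have hlen' : v.length = 2 * n := by omega
  have hvval : ∀ x ∈ v, x ∈ Finset.Icc 1 (n+1) := hsurj.1
  have hmem : (n+1) ∈ v := hsurj.2 _ (by simp [Finset.mem_Icc])
  have hcount : v.count (n+1) = 1 :=
    le_antisymm (count_top_le_one hnd hbad
        (fun x hx => (Finset.mem_Icc.mp (hvval x hx)).2))
      (List.count_pos_iff.mpr hmem)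
  obtain ⟨A, B, rfl⟩ := List.append_of_mem hmem
  have hcAB : A.count (n+1) = 0 ∧ B.count (n+1) = 0 := by
    rw [List.count_append, List.count_cons] at hcount
    simp at hcount; omega
  have hA0 : (n+1) ∉ A := List.count_eq_zero.mp hcAB.1
  have hB0 : (n+1) ∉ B := List.count_eq_zero.mp hcAB.2
  have hABval : ∀ x, (x ∈ A ∨ x ∈ B) → x ∈ Finset.Icc 1 n := by
    intro x hx
    have hxv : x ∈ A ++ (n+1) :: B := by
      rcases hx with h | h
      · exact List.mem_append_left _ h
      · exact List.mem_append_right _ (List.mem_cons_of_mem _ h)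
    have h1 := Finset.mem_Icc.mp (hvval x hxv)
    have h2 : x ≠ n + 1 := by rintro rfl; rcases hx with h | h; exacts [hA0 h, hB0 h]
    simp [Finset.mem_Icc]; omega
  have hABsurj : ∀ x ∈ Finset.Icc 1 n, x ∈ A ∨ x ∈ B := by
    intro x hx
    simp [Finset.mem_Icc] at hx
    have hxv := hsurj.2 x (by simp [Finset.mem_Icc]; omega)
    rcases List.mem_append.mp hxv with h | h
    · exact Or.inl h
    · rcases List.mem_cons.mp h with rfl | h
      · omega
      · exact Or.inr h
  have hbound : ∀ w' : List ℕ, Nondeg w' → w' <+ A ++ (n+1) :: B →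
      (∀ x, (x ∈ A ∨ x ∈ B) → x ∈ w') → (∀ x ∈ w', x ∈ A ∨ x ∈ B) →
      w'.length ≤ 2 * n - 2 := by
    intro w' h1 h2 h3 h4
    have h5 := surj_length_le n w' h1 (noijij_sublist hij h2) (nobad_sublist hbad h2)
      ⟨fun x hx => hABval x (h4 x hx), fun x hx => h3 x (hABsurj x hx)⟩
    omega
  rcases B with _ | ⟨b, B₀⟩
  · exfalso
    have h6 := hbound A (hnd.prefix ⟨[n+1], rfl⟩) (List.sublist_append_left _ _)
      (by rintro x (h | h); exact h; simp at h) (fun x hx => Or.inl hx)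
    simp at hlen'
    omega
  rcases List.eq_nil_or_concat A with rfl | ⟨A₀, a, rfl⟩
  · exfalso
    have hndB : Nondeg (b :: B₀) := by
      have h7 : Nondeg ((n+1) :: b :: B₀) := by simpa [Nondeg] using hnd
      exact (List.isChain_cons_cons.mp h7).2
    have h6 := hbound (b :: B₀) hndB (List.sublist_cons_self _ _)
      (by rintro x (h | h); simp at h; exact h) (fun x hx => Or.inr hx)
    simp at hlen' h6
    omega
  simp only [List.concat_eq_append] at *
  by_cases hab : a = b
  case neg =>
    exfalso
    have hsub : (A₀ ++ [a]) ++ b :: B₀ <+ (A₀ ++ [a]) ++ (n+1) :: b :: B₀ :=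
      (List.append_sublist_append_left _).mpr (List.sublist_cons_self _ _)
    have hndw : Nondeg ((A₀ ++ [a]) ++ b :: B₀) := by
      have h0 : Chain' (· ≠ ·) ((A₀ ++ [a]) ++ (n+1) :: b :: B₀) := hnd
      rw [List.Chain', List.isChain_append] at h0
      obtain ⟨hA', hMB', _⟩ := h0
      rw [Nondeg, List.Chain', List.isChain_append]
      refine ⟨hA', (List.isChain_cons_cons.mp hMB').2, ?_⟩
      intro x hx y hy
      have hx' : a = x := by rw [List.getLast?_concat] at hx; simpa using hx
      have hy' : b = y := by simpa using hy
      subst hx'; subst hy'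
      exact hab
    have h6 := hbound ((A₀ ++ [a]) ++ b :: B₀) hndw hsub
      (by rintro x (h | h)
          · exact List.mem_append_left _ h
          · exact List.mem_append_right _ h)
      (by intro x hx
          rcases List.mem_append.mp hx with h | h
          · exact Or.inl h
          · exact Or.inr h)
    simp at hlen' h6
    omega
  case pos =>
  subst hab
  -- the candidate
  set u : List ℕ := A₀ ++ a :: B₀ with hudef
  set j : ℕ := A₀.length with hjdef
  have hlenv : A₀.length + 1 + (1 + (1 + B₀.length)) = 2 * n := by
    simp at hlen'; omega
  have hulen : u.length = 2 * n - 2 := by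
    simp [hudef]; omega
  have husub : u <+ (A₀ ++ [a]) ++ (n+1) :: a :: B₀ := by
    have h1 : (A₀ ++ [a]) ++ (n+1) :: a :: B₀ = A₀ ++ a :: (n+1) :: a :: B₀ := by simp
    rw [h1, hudef]
    refine (List.append_sublist_append_left _).mpr ?_
    exact List.Sublist.cons₂ _ ((List.sublist_cons_self _ _).trans
      (List.sublist_cons_self _ _))
  have huval : ∀ x ∈ u, x ∈ Finset.Icc 1 n := by
    intro x hx
    refine hABval x ?_
    rw [hudef] at hx
    rcases List.mem_append.mp hx with h | h
    · exact Or.inl (List.mem_append_left _ h)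
    · rcases List.mem_cons.mp h with rfl | h
      · exact Or.inl (by simp)
      · exact Or.inr (List.mem_cons_of_mem _ h)
  have husurj : ∀ x ∈ Finset.Icc 1 n, x ∈ u := by
    intro x hx
    rcases hABsurj x hx with h | h
    · rcases List.mem_append.mp h with h | h
      · rw [hudef]; exact List.mem_append_left _ h
      · rw [hudef]; simp at h; simp [h]
    · rcases List.mem_cons.mp h with rfl | h
      · rw [hudef]; simp
      · rw [hudef]; exact List.mem_append_right _ (List.mem_cons_of_mem _ h)
  have hndu : Nondeg u := by
    have h0 : Chain' (· ≠ ·) ((A₀ ++ [a]) ++ (n+1) :: a :: B₀) := hnd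
    rw [List.Chain', List.isChain_append] at h0
    obtain ⟨hA', hMB', _⟩ := h0
    rw [hudef, Nondeg, List.Chain', List.isChain_append]
    refine ⟨hA'.prefix ⟨[a], rfl⟩, (List.isChain_cons_cons.mp hMB').2, ?_⟩
    intro x hx y hy
    have hy' : a = y := by simpa using hy
    subst hy'
    rw [List.isChain_append] at hA'
    exact hA'.2.2 x hx a (by simp)
  have hane : a ≠ n := by
    intro hEq
    subst hEq
    refine hbad a (a+1) (Or.inl rfl) ?_
    have h1 : [a, a+1, a] <+ a :: (a+1) :: a :: B₀ := by
      refine List.Sublist.cons₂ _ (List.Sublist.cons₂ _ ?_)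
      exact List.singleton_sublist.mpr (by simp)
    have h2 : (A₀ ++ [a]) ++ (a+1) :: a :: B₀ = A₀ ++ a :: (a+1) :: a :: B₀ := by simp
    rw [h2]
    exact h1.trans (List.sublist_append_right A₀ _)
  have hmemc : MemC' n u := by
    refine ⟨⟨by rw [hulen]; omega, hndu, ⟨huval, husurj⟩, noijij_sublist hij husub⟩,
      nobad_sublist hbad husub⟩
  have hjlt : j < u.length := by rw [hudef, hjdef]; simp
  have hugetj : u.getD j 0 = a := by
    show (A₀ ++ a :: B₀).getD A₀.length 0 = a
    rw [List.getD_eq_getElem _ 0 (by simp), List.getElem_append_right (le_refl A₀.length)]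
    simp
  have hnmemu : n ∈ u := husurj n (by simp [Finset.mem_Icc]; omega)
  have hidx : u.idxOf n < u.length := List.idxOf_lt_length_iff.mpr hnmemu
  have hjne : j ≠ u.idxOf n := by
    intro hEq
    have h9 : u.getD (u.idxOf n) 0 = n := by
      rw [getD_eq hidx]; exact List.getElem_idxOf hidx
    rw [← hEq, hugetj] at h9
    exact hane h9
  have hring : ringIns u (n+1) j = (A₀ ++ [a]) ++ (n+1) :: a :: B₀ := by
    rw [ringIns]
    have h1 : u.take j = A₀ := by
      show (A₀ ++ a :: B₀).take A₀.length = A₀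
      exact List.take_left' rfl
    have h3 : u.drop (j+1) = B₀ := by
      show (A₀ ++ a :: B₀).drop (A₀.length + 1) = B₀
      simp [List.drop_append]
    rw [h1, hugetj, h3]
    simp
  refine ⟨(u, j), ⟨hmemc, hjlt, hjne, hring⟩, ?_⟩
  -- uniqueness
  rintro ⟨u', j'⟩ ⟨⟨⟨hlen2, hnd2, hsurj2, hij2⟩, hbad2⟩, hj2len, hj2ne, heq⟩
  dsimp only at hlen2 hnd2 hsurj2 hij2 hbad2 hj2len hj2ne heq
  have hval2 : ∀ x ∈ u', x ≠ n + 1 := by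
    intro x hx
    have := Finset.mem_Icc.mp (hsurj2.1 x hx)
    omega
  have hg : u'.getD j' 0 = u'[j'] := getD_eq hj2len
  have heq2 : (u'.take j' ++ [u'.getD j' 0]) ++ (n+1) ::
      (u'.getD j' 0 :: u'.drop (j'+1)) = (A₀ ++ [a]) ++ (n+1) :: a :: B₀ := by
    rw [← heq, ringIns]; simp
  have hnotin1 : (n+1) ∉ u'.take j' ++ [u'.getD j' 0] := by
    intro h
    rcases List.mem_append.mp h with h | h
    · exact hval2 _ (List.mem_of_mem_take h) rfl
    · rw [List.mem_singleton] at h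
      have h10 : u'[j'] ∈ u' := List.getElem_mem hj2len
      refine hval2 _ h10 ?_
      rw [← hg]; exact h.symm
  have hkey := append_singleton_eq heq2 hnotin1 hA0
  have hY : u'.getD j' 0 = a ∧ u'.drop (j'+1) = B₀ := by
    have := hkey.2
    exact ⟨by injection this, by injection this⟩
  have hX : u'.take j' = A₀ := by
    have h5 := List.append_inj' hkey.1 (by simp)
    exact h5.1
  have hj' : j' = j := by
    have h6 : (u'.take j').length = j' := by
      rw [List.length_take]; omega
    rw [hX] at h6
    rw [hjdef, ← h6]
  have hu' : u' = u := by
    have h7 : u' = u'.take j' ++ u'.drop j' := (List.take_append_drop _ _).symm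
    rw [List.drop_eq_getElem_cons hj2len] at h7
    rw [h7, hX, ← hg, hY.1, hY.2, hudef]
  rw [Prod.mk.injEq]
  exact ⟨hu', hj'⟩


end RingProofAux

/-- inserting a lobe n+1 over the j-th entry (j not the position of the
unique occurrence of n) of a cactus with no bad (i,j,i) subsequence again yields such
a cactus; conversely every element of C′_{n+1} arises as ů_j for a unique u ∈ C′ₙ
and position j. -/
theorem ringIns_closure_and_bijection :
    (∀ n k : ℕ, ∀ u : List ℕ, IsCactus n k u → NoBadIJI u → u.count n = 1 →
      ∀ j : ℕ, j < u.length → j ≠ u.idxOf n →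
        IsCactus (n + 1) (k + 1) (ringIns u (n + 1) j) ∧
        NoBadIJI (ringIns u (n + 1) j)) ∧
    (∀ n : ℕ, 2 ≤ n → ∀ v : List ℕ, MemC' (n + 1) v →
      ∃! uj : List ℕ × ℕ, MemC' n uj.1 ∧ uj.2 < uj.1.length ∧
        uj.2 ≠ uj.1.idxOf n ∧ ringIns uj.1 (n + 1) uj.2 = v) :=
  ⟨RingProofAux.part1, RingProofAux.part2⟩
end

section
/- The maximal degree of a cactus with n lobes is n−1: every non-degenerate surjection u: {1,...,n+k} → {1,...,n} with no (i,j,i,j) subsequence (i≠j) satisfies k ≤ n−1. -/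
open Finsupp

open List in
lemma mem_split_first {a : ℕ} {l : List ℕ} (h : a ∈ l) :
    ∃ w x, l = w ++ a :: x ∧ a ∉ w := by
  induction l with
  | nil => simp at h
  | cons b t ih =>
    by_cases hb : a = b
    · exact ⟨[], t, by simp [hb], by simp⟩
    · have h1 : a ∈ t := (List.mem_cons.mp h).resolve_left hb
      obtain ⟨w, x, hwx, haw⟩ := ih h1
      exact ⟨b :: w, x, by simp [hwx], by simp [haw, hb]⟩

open List in
lemma key : ∀ N, ∀ u : List ℕ, u.length ≤ N → u ≠ [] → Nondeg u → NoIJIJ u →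
    u.length + 1 ≤ 2 * u.toFinset.card := by
  intro N
  induction N with
  | zero =>
    intro u hlen hne
    simp [List.length_eq_zero_iff] at hlen
    exact absurd hlen hne
  | succ N ih =>
    intro u hlen hne h2 h4
    obtain ⟨a, v, rfl⟩ := List.exists_cons_of_ne_nil hne
    rcases eq_or_ne v [] with rfl | hv
    · simp
    by_cases hav : a ∈ v
    · obtain ⟨w, x, rfl, haw⟩ := mem_split_first hav
      have hw : w ≠ [] := by
        rintro rfl
        exact (List.isChain_cons_cons.mp h2).1 rfl
      have hdisj : ∀ b, b ∈ w → b ∈ x → False := by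
        intro b hbw hbx
        have hab : a ≠ b := fun h => haw (h ▸ hbw)
        have hsub : List.Sublist [a, b, a, b] (a :: (w ++ a :: x)) := by
          have : List.Sublist ([a] ++ [b] ++ [a] ++ [b]) ([a] ++ w ++ [a] ++ x) :=
            (((List.Sublist.refl [a]).append (List.singleton_sublist.mpr hbw)).append
              (List.Sublist.refl [a])).append (List.singleton_sublist.mpr hbx)
          simpa using this
        exact h4 a b hab hsub
      rcases eq_or_ne x [] with rfl | hx
      · -- u = a :: w ++ [a]
        have hlenu : (a :: (w ++ [a])).length = w.length + 2 := by simp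
        rw [hlenu] at hlen
        have hwnd : Nondeg w := h2.infix ⟨[a], [a], by simp⟩
        have hwij : NoIJIJ w := fun i j hij hs =>
          h4 i j hij (hs.trans (by simp : List.Sublist w (a :: (w ++ [a]))))
        have i1 := ih w (by omega) hw hwnd hwij
        have hcard : (a :: (w ++ [a])).toFinset.card = w.toFinset.card + 1 := by
          have h5 : (a :: (w ++ [a])).toFinset = insert a w.toFinset := by
            ext b
            simp only [List.toFinset_cons, List.toFinset_append, Finset.mem_insert,
              Finset.mem_union, List.mem_toFinset, List.toFinset_cons, List.toFinset_nil,
              Finset.union_comm]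
            tauto
          rw [h5, Finset.card_insert_of_notMem (by simpa using haw)]
        omega
      · -- u = a :: w ++ a :: x, both w,x nonempty
        have hlenu : (a :: (w ++ a :: x)).length = w.length + x.length + 2 := by
          simp only [List.length_cons, List.length_append]; omega
        have hpre : (a :: (w ++ [a])) <+: (a :: (w ++ a :: x)) := ⟨x, by simp⟩
        have hsuf : (a :: x) <:+ (a :: (w ++ a :: x)) := ⟨a :: w, by simp⟩
        have h1nd : Nondeg (a :: (w ++ [a])) := h2.prefix hpre
        have h2nd : Nondeg (a :: x) := h2.suffix hsuf
        have h1ij : NoIJIJ (a :: (w ++ [a])) := fun i j hij hs =>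
          h4 i j hij (hs.trans hpre.sublist)
        have h2ij : NoIJIJ (a :: x) := fun i j hij hs =>
          h4 i j hij (hs.trans hsuf.sublist)
        have hwl : 1 ≤ w.length := List.length_pos_iff.mpr hw
        have hxl : 1 ≤ x.length := List.length_pos_iff.mpr hx
        have i1 := ih (a :: (w ++ [a]))
          (by simp only [List.length_cons, List.length_append, List.length_singleton, List.length_nil]; omega)
          (by simp) h1nd h1ij
        have i2 := ih (a :: x)
          (by simp only [List.length_cons]; omega) (by simp) h2nd h2ij
        have hl1 : (a :: (w ++ [a])).length = w.length + 2 := by simp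
        have hl2 : (a :: x).length = x.length + 1 := by simp
        have hc1 : (a :: (w ++ [a])).toFinset.card = w.toFinset.card + 1 := by
          have h5 : (a :: (w ++ [a])).toFinset = insert a w.toFinset := by
            ext b
            simp only [List.toFinset_cons, List.toFinset_append, Finset.mem_insert,
              Finset.mem_union, List.mem_toFinset, List.toFinset_nil]
            tauto
          rw [h5, Finset.card_insert_of_notMem (by simpa using haw)]
        have hdisj2 : Disjoint w.toFinset (a :: x).toFinset := by
          rw [Finset.disjoint_left]
          intro b hbw hb
          rcases (by simpa using hb : b = a ∨ b ∈ x) with rfl | hbx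
          · exact haw (List.mem_toFinset.mp hbw)
          · exact hdisj b (List.mem_toFinset.mp hbw) hbx
        have hcard : (a :: (w ++ a :: x)).toFinset.card
            = w.toFinset.card + (a :: x).toFinset.card := by
          have h5 : (a :: (w ++ a :: x)).toFinset = w.toFinset ∪ (a :: x).toFinset := by
            ext b
            simp only [List.toFinset_cons, List.toFinset_append, Finset.mem_insert,
              Finset.mem_union, List.mem_toFinset, List.mem_cons]
            tauto
          rw [h5, Finset.card_union_of_disjoint hdisj2]
        omega
    · -- a ∉ v
      have hvn : Nondeg v := h2.tail
      have hvij : NoIJIJ v := fun i j hij hs =>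
        h4 i j hij (hs.trans (List.sublist_cons_self a v))
      have hlv : (a :: v).length = v.length + 1 := by simp
      have := ih v (by omega) hv hvn hvij
      have hcard : (a :: v).toFinset.card = v.toFinset.card + 1 := by
        rw [List.toFinset_cons, Finset.card_insert_of_notMem (by simpa using hav)]
      omega

/-- the maximal degree of a cactus with n lobes is n−1: a non-degenerate
surjection onto {1,…,n} with no (i,j,i,j) subsequence has degree k ≤ n−1, i.e. its
domain has size at most 2n−1. -/
theorem cactus_degree_le (n k : ℕ) (u : List ℕ) (h1 : u.length = n + k)
    (h2 : Nondeg u) (h3 : IsSurjSeq n u) (h4 : NoIJIJ u) :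
    k ≤ n - 1 ∧ u.length ≤ 2 * n - 1 := by
  rcases Nat.eq_zero_or_pos n with rfl | hn
  · have hu : u = [] := by
      rw [List.eq_nil_iff_forall_not_mem]
      intro x hx
      simpa using h3.1 x hx
    subst hu
    simp at h1 ⊢
    omega
  · have h1u : (1 : ℕ) ∈ u := h3.2 1 (by simp [Finset.mem_Icc]; omega)
    have hne : u ≠ [] := List.ne_nil_of_mem h1u
    have htf : u.toFinset = Finset.Icc 1 n := by
      ext x
      simp only [List.mem_toFinset, Finset.mem_Icc]
      constructor
      · intro hx
        simpa using h3.1 x hx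
      · intro hx
        exact h3.2 x (by simp [Finset.mem_Icc]; omega)
    have hcard : u.toFinset.card = n := by
      rw [htf, Nat.card_Icc]
      omega
    have hk := key u.length u le_rfl hne h2 h4
    rw [hcard, h1] at hk
    constructor <;> omega
end

section
/- There is a morphism of differential graded operads φ: A_∞ → A^{(2)}_∞ determined on generators by φ(m_n) = Σ_{ξ ∈ {□,▪}^{n-1}} m_ξ; i.e., this assignment commutes with the differentials given by ∂(m_n) = Σ_{i=1}^{n} (−1)^{i-1} Σ_{p+q-1=n} (−1)^{q(p-i)} m_p ∘ᵢ m_q and ∂(m_ξ) = Σ_{i=1}^{n} (−1)^{i-1} Σ_{ξ′∘ᵢξ″=ξ} (−1)^{q(p-i)} m_{ξ′} ∘ᵢ m_{ξ″}. -/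
open Finsupp

/-- The quadratic part of the A∞ differential: ∂(m_n) = Σᵢ (−1)^{i−1} Σ_{p+q−1=n}
(−1)^{q(p−i)} m_p ∘ᵢ m_q, recorded as a formal sum of triples (p, i, q). -/
noncomputable def dAinf (n : ℕ) : (ℕ × ℕ × ℕ) →₀ ℤ :=
  ∑ p ∈ Finset.Icc 2 (n - 1), ∑ i ∈ Finset.Icc 1 p,
    ((-1 : ℤ) ^ (i - 1 + (n + 1 - p) * (p - i))) • Finsupp.single (p, i, n + 1 - p) 1

/-- The quadratic part of the A∞⁽²⁾ differential: ∂(m_ξ) = Σᵢ (−1)^{i−1}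
Σ_{ξ′∘ᵢξ″=ξ} (−1)^{q(p−i)} m_{ξ′} ∘ᵢ m_{ξ″}, recorded as a formal sum of triples
(ξ′, i, ξ″); the unique decomposition of ξ with parameters (p, i, q) is
ξ′ = ξ.take (i−1) ++ ξ.drop (i−1+q−1) and ξ″ = (ξ.drop (i−1)).take (q−1). -/
noncomputable def dAinf2 (xi : List Bool) : (List Bool × ℕ × List Bool) →₀ ℤ :=
  ∑ p ∈ Finset.Icc 2 xi.length, ∑ i ∈ Finset.Icc 1 p,
    ((-1 : ℤ) ^ (i - 1 + (xi.length + 2 - p) * (p - i))) •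
      Finsupp.single
        (xi.take (i - 1) ++ xi.drop (i - 1 + (xi.length + 1 - p)), i,
          (xi.drop (i - 1)).take (xi.length + 1 - p)) 1

/-- φ applied termwise to quadratic expressions: m_p ∘ᵢ m_q ↦ Σ_{ξ′,ξ″} m_{ξ′} ∘ᵢ m_{ξ″}. -/
noncomputable def phiQuad (x : (ℕ × ℕ × ℕ) →₀ ℤ) : (List Bool × ℕ × List Bool) →₀ ℤ :=
  x.sum fun piq c =>
    c • ∑ f : Fin (piq.1 - 1) → Bool, ∑ g : Fin (piq.2.2 - 1) → Bool,
      Finsupp.single (List.ofFn f, piq.2.1, List.ofFn g) 1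


def splitEquiv (a b s : ℕ) (hs : s ≤ a) :
    ((Fin a → Bool) × (Fin b → Bool)) ≃ (Fin (a + b) → Bool) where
  toFun fg k :=
    if hk : (k : ℕ) < s then fg.1 ⟨k, by omega⟩
    else if hk2 : (k : ℕ) < s + b then fg.2 ⟨(k : ℕ) - s, by omega⟩
    else fg.1 ⟨(k : ℕ) - b, by omega⟩
  invFun h :=
    (fun j => h ⟨if (j : ℕ) < s then (j : ℕ) else (j : ℕ) + b, by split_ifs <;> omega⟩,
     fun j => h ⟨s + (j : ℕ), by omega⟩)
  left_inv := by
    rintro ⟨f, g⟩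
    ext j
    · dsimp only
      split_ifs
      all_goals
        first
          | exact congrArg f (Fin.ext (by (try simp only [Fin.val_mk]); try omega))
          | exact congrArg g (Fin.ext (by (try simp only [Fin.val_mk]); try omega))
          | (exfalso; omega)
    · dsimp only
      split_ifs
      all_goals
        first
          | exact congrArg f (Fin.ext (by (try simp only [Fin.val_mk]); try omega))
          | exact congrArg g (Fin.ext (by (try simp only [Fin.val_mk]); try omega))
          | (exfalso; omega)
  right_inv := by
    intro h
    funext k
    dsimp only
    split_ifs
    all_goals
      first
        | exact congrArg h (Fin.ext (by (try simp only [Fin.val_mk]); try omega))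
        | (exfalso; omega)

lemma splitEquiv_fst (a b s : ℕ) (hs : s ≤ a) (f : Fin a → Bool) (g : Fin b → Bool) :
    (List.ofFn (splitEquiv a b s hs (f, g))).take s ++
      (List.ofFn (splitEquiv a b s hs (f, g))).drop (s + b) = List.ofFn f := by
  apply List.ext_getElem
  · simp; omega
  · intro j h1 h2
    simp only [List.length_ofFn] at h2
    have hlt : (List.take s (List.ofFn (splitEquiv a b s hs (f, g)))).length = s := by
      simp; omega
    by_cases hj : j < s
    · rw [List.getElem_append_left (by omega)]
      rw [List.getElem_take, List.getElem_ofFn, List.getElem_ofFn]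
      show (splitEquiv a b s hs (f, g)) _ = _
      simp only [splitEquiv, Equiv.coe_fn_mk]
      rw [dif_pos (by simpa using hj)]
    · rw [List.getElem_append_right (by omega)]
      rw [List.getElem_drop, List.getElem_ofFn, List.getElem_ofFn]
      show (splitEquiv a b s hs (f, g)) _ = _
      simp only [splitEquiv, Equiv.coe_fn_mk]
      rw [dif_neg (by simp [hlt]; try omega), dif_neg (by simp [hlt]; try omega)]
      exact congrArg f (Fin.ext (by (try simp only [Fin.val_mk]); try simp [hlt]; omega))

lemma splitEquiv_snd (a b s : ℕ) (hs : s ≤ a) (f : Fin a → Bool) (g : Fin b → Bool) :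
    ((List.ofFn (splitEquiv a b s hs (f, g))).drop s).take b = List.ofFn g := by
  apply List.ext_getElem
  · simp; omega
  · intro j h1 h2
    simp only [List.length_ofFn] at h2
    rw [List.getElem_take, List.getElem_drop, List.getElem_ofFn, List.getElem_ofFn]
    show (splitEquiv a b s hs (f, g)) _ = _
    simp only [splitEquiv, Equiv.coe_fn_mk]
    rw [dif_neg (by simp; try omega), dif_pos (by simp; try omega)]
    exact congrArg g (Fin.ext (by (try simp only [Fin.val_mk]); try simp; try omega))

lemma split_sum {M : Type*} [AddCommMonoid M] (m a b s : ℕ) (hm : m = a + b) (hs : s ≤ a)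
    (G : List Bool → List Bool → M) :
    (∑ h : Fin m → Bool,
        G ((List.ofFn h).take s ++ (List.ofFn h).drop (s + b)) (((List.ofFn h).drop s).take b))
      = ∑ f : Fin a → Bool, ∑ g : Fin b → Bool, G (List.ofFn f) (List.ofFn g) := by
  subst hm
  refine Eq.trans ?_
    (Fintype.sum_prod_type (f := fun fg : (Fin a → Bool) × (Fin b → Bool) =>
      G (List.ofFn fg.1) (List.ofFn fg.2)))
  refine (Fintype.sum_equiv (splitEquiv a b s hs) _ _ ?_).symm
  rintro ⟨f, g⟩
  rw [splitEquiv_fst a b s hs f g, splitEquiv_snd a b s hs f g]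

noncomputable def phiHom : ((ℕ × ℕ × ℕ) →₀ ℤ) →+ ((List Bool × ℕ × List Bool) →₀ ℤ) where
  toFun := phiQuad
  map_zero' := Finsupp.sum_zero_index
  map_add' x y := by
    simp only [phiQuad]
    exact Finsupp.sum_add_index' (fun piq => zero_smul _ _) (fun piq c d => add_smul c d _)
/-- the assignment φ(m_n) = Σ_{ξ ∈ {□,▪}^{n−1}} m_ξ commutes with the
differentials of A∞ and A∞⁽²⁾, hence defines a morphism of dg operads A∞ → A∞⁽²⁾. -/
theorem phi_commutes_with_differentials (n : ℕ) (hn : 2 ≤ n) :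
    phiQuad (dAinf n) = ∑ h : Fin (n - 1) → Bool, dAinf2 (List.ofFn h) := by
  have hL : phiQuad (dAinf n) =
      ∑ p ∈ Finset.Icc 2 (n - 1), ∑ i ∈ Finset.Icc 1 p,
        ((-1 : ℤ) ^ (i - 1 + (n + 1 - p) * (p - i))) •
          ∑ f : Fin (p - 1) → Bool, ∑ g : Fin (n + 1 - p - 1) → Bool,
            Finsupp.single (List.ofFn f, i, List.ofFn g) (1 : ℤ) := by
    show phiHom (dAinf n) = _
    rw [dAinf, map_sum]
    refine Finset.sum_congr rfl fun p hp => ?_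
    rw [map_sum]
    refine Finset.sum_congr rfl fun i hi => ?_
    show phiQuad _ = _
    rw [Finsupp.smul_single, smul_eq_mul, mul_one]
    rw [phiQuad, Finsupp.sum_single_index (by simp)]
  rw [hL]
  have hR : ∀ h : Fin (n - 1) → Bool, dAinf2 (List.ofFn h) =
      ∑ p ∈ Finset.Icc 2 (n - 1), ∑ i ∈ Finset.Icc 1 p,
        ((-1 : ℤ) ^ (i - 1 + (n + 1 - p) * (p - i))) •
          Finsupp.single ((List.ofFn h).take (i - 1) ++ (List.ofFn h).drop (i - 1 + (n - p)), i,
            ((List.ofFn h).drop (i - 1)).take (n - p)) 1 := by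
    intro h
    rw [dAinf2]
    simp only [List.length_ofFn]
    rw [show n - 1 + 2 = n + 1 from by omega, show n - 1 + 1 = n from by omega]
  simp only [hR]
  conv_rhs => rw [Finset.sum_comm]
  refine Finset.sum_congr rfl fun p hp => ?_
  conv_rhs => rw [Finset.sum_comm]
  refine Finset.sum_congr rfl fun i hi => ?_
  rw [← Finset.smul_sum]
  congr 1
  rw [show n + 1 - p - 1 = n - p from by omega]
  simp only [Finset.mem_Icc] at hp hi
  exact (split_sum (n - 1) (p - 1) (n - p) (i - 1) (by omega) (by omega)
    (fun l1 l2 => Finsupp.single (l1, i, l2) 1)).symm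
end

section
/- For n ≥ 3, |C′_{n+1}| = (2n−3)·|C′_n|: the map sending v ∈ C′_{n+1} to the pair (u, j), where u ∈ C′_n is obtained by deleting both occurrences of the value n+1 from v (merging the equal flanking entries), and j ∈ {1,...,2n−2} is the position in u at which n+1 was inserted, is a bijection onto the set of pairs (u, j) with u ∈ C′_n and j ≠ i₀(u), where i₀(u) is the unique position of the value n in u. -/
open Finsupp

lemma noIJIJ_sublist {w' w : List ℕ} (h : w'.Sublist w) (hw : NoIJIJ w) : NoIJIJ w' :=
  fun i j hij hs => hw i j hij (hs.trans h)

lemma noBadIJI_sublist {w' w : List ℕ} (h : w'.Sublist w) (hw : NoBadIJI w) : NoBadIJI w' :=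
  fun i j hij hs => hw i j hij (hs.trans h)

/-- split at the unique occurrence of the maximal value -/
lemma split_top : ∀ (w : List ℕ) (n : ℕ), Nondeg w → (∀ x ∈ w, x ∈ Finset.Icc 1 n) →
    NoBadIJI w → n ∈ w → ∃ x y, w = x ++ n :: y ∧ n ∉ x ∧ n ∉ y := by
  intro w n
  induction w with
  | nil => intro _ _ _ h; cases h
  | cons c w ih =>
    intro hnd hmem hbad hmemn
    by_cases hc : c = n
    · subst hc
      refine ⟨[], w, rfl, by simp, ?_⟩
      intro hn
      obtain ⟨s, t, rfl⟩ := List.append_of_mem hn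
      cases s with
      | nil => exact (List.isChain_cons_cons.mp hnd).1 rfl
      | cons d s =>
        have hd : d ≠ c := fun h => (List.isChain_cons_cons.mp hnd).1 h.symm
        have hdmem : d ∈ Finset.Icc 1 c := hmem d (by simp)
        have hdlt : d < c := lt_of_le_of_ne (Finset.mem_Icc.mp hdmem).2 hd
        refine hbad c d (Or.inr hdlt) ?_
        -- [c, d, c] <+ c :: d :: s ++ c :: t
        refine List.cons_sublist_cons.mpr (List.cons_sublist_cons.mpr ?_)
        exact (List.singleton_sublist.mpr (by simp))
    · have hmemn' : n ∈ w := by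
        rcases List.mem_cons.mp hmemn with h | h
        · exact absurd h.symm hc
        · exact h
      obtain ⟨x, y, rfl, hx, hy⟩ := ih (List.isChain_cons.mp hnd).2
        (fun z hz => hmem z (by simp [hz]))
        (noBadIJI_sublist (List.sublist_cons_self _ _) hbad) hmemn'
      exact ⟨c :: x, y, rfl, by simp [hx, Ne.symm hc, hc], hy⟩

/-- remove a doubled adjacent pair from a sublist with no equal neighbours -/
lemma dedup_adjacent {P l1 l2 : List ℕ} {a : ℕ} (hP : P.Chain' (· ≠ ·))
    (h : P.Sublist (l1 ++ a :: a :: l2)) : P.Sublist (l1 ++ a :: l2) := by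
  rw [List.sublist_append_iff] at h
  obtain ⟨P1, P2, rfl, h1, h2⟩ := h
  rw [List.sublist_append_iff]
  refine ⟨P1, P2, rfl, h1, ?_⟩
  rcases List.sublist_cons_iff.mp h2 with h2' | ⟨r, rfl, hr⟩
  · rcases List.sublist_cons_iff.mp h2' with h2'' | ⟨r, rfl, hr⟩
    · exact h2''.trans (List.sublist_cons_self _ _)
    · exact List.cons_sublist_cons.mpr hr
  · rcases List.sublist_cons_iff.mp hr with hr' | ⟨r', rfl, hr'⟩
    · exact List.cons_sublist_cons.mpr hr'
    · exfalso
      have : (a :: a :: r').Chain' (· ≠ ·) := ((List.isChain_append.mp hP).2).1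
      exact (List.isChain_cons_cons.mp this).1 rfl

/-- key bound: a nondegenerate sequence with values in `Icc 1 n`, no (i,j,i,j) and
no bad (i,j,i), has length at most `max 1 (2n-2)`. -/
lemma good_len : ∀ (n : ℕ) (w : List ℕ), Nondeg w → (∀ x ∈ w, x ∈ Finset.Icc 1 n) →
    NoIJIJ w → NoBadIJI w → w.length ≤ max 1 (2 * n - 2) := by
  intro n
  induction n using Nat.strong_induction_on with
  | _ n ih =>
  intro w hnd hmem hijij hbad
  by_cases hmemn : n ∈ w
  case neg =>
    rcases Nat.eq_zero_or_pos n with rfl | hn1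
    · cases w with
      | nil => simp
      | cons c w => exact absurd (hmem c (by simp)) (by simp)
    · have := ih (n-1) (by omega) w hnd (fun x hx => by
        have := Finset.mem_Icc.mp (hmem x hx)
        have : x ≠ n := fun h => hmemn (h ▸ hx)
        simp only [Finset.mem_Icc]; omega) hijij hbad
      exact this.trans (max_le_max le_rfl (by omega))
  case pos =>
  have hn1 : 1 ≤ n := (Finset.mem_Icc.mp (hmem n hmemn)).1
  obtain ⟨x, y, rfl, hxn, hyn⟩ := split_top _ n hnd hmem hbad hmemn
  set w := x ++ n :: y with hw
  have hmem' : ∀ z, (z ∈ x ∨ z ∈ y) → z ∈ Finset.Icc 1 (n-1) := by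
    intro z hz
    have hzw : z ∈ w := by rcases hz with h | h <;> simp [hw, h]
    have h1 := Finset.mem_Icc.mp (hmem z hzw)
    have h2 : z ≠ n := by rintro rfl; rcases hz with h | h; exacts [hxn h, hyn h]
    simp only [Finset.mem_Icc]; omega
  rcases Nat.lt_or_ge n 2 with hn2 | hn2
  · -- n = 1 : x and y are empty
    have hn1' : n = 1 := by omega
    subst hn1'
    have hx : x = [] := by
      cases x with
      | nil => rfl
      | cons c x => exact absurd (hmem' c (Or.inl (by simp))) (by simp)
    have hy : y = [] := by
      cases y with
      | nil => rfl
      | cons c y => exact absurd (hmem' c (Or.inr (by simp))) (by simp)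
    simp [hw, hx, hy]
  -- n ≥ 2
  have IH : ∀ w' : List ℕ, Nondeg w' → (∀ z ∈ w', z ∈ x ∨ z ∈ y) → w'.Sublist w →
      w'.length ≤ max 1 (2*(n-1) - 2) := by
    intro w' h1 h2 h3
    exact ih (n-1) (by omega) w' h1 (fun z hz => hmem' z (h2 z hz))
      (noIJIJ_sublist h3 hijij) (noBadIJI_sublist h3 hbad)
  have harithA : max 1 (2*(n-1)-2) + 1 ≤ max 1 (2*n-2) := by
    rcases Nat.lt_or_ge n 3 with h | h
    · have : n = 2 := by omega
      subst this; simp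
    · rw [Nat.max_eq_right (by omega), Nat.max_eq_right (by omega)]; omega
  have hchx : Nondeg x := (List.isChain_append.mp hnd).1
  have hchny : Nondeg (n :: y) := (List.isChain_append.mp hnd).2.1
  have hchy : Nondeg y := (List.isChain_cons.mp hchny).2
  rcases List.eq_nil_or_concat x with rfl | ⟨x', a, rfl⟩
  · -- x empty
    have := IH y hchy (fun z hz => Or.inr hz)
      ((List.sublist_cons_self n y).trans (by simp [hw]))
    simp only [hw, List.nil_append, List.length_cons]
    omega
  rcases y with _ | ⟨b, y'⟩
  · -- y empty
    have := IH (x'.concat a) hchx (fun z hz => Or.inl hz)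
      (by simp [hw])
    simp only [hw, List.length_append, List.length_cons, List.length_nil]
    simp only [List.length_concat] at this ⊢
    omega
  have hjunction : a ≠ n := by
    intro h; exact hxn (by simp [h])
  have ha_last : (x' ++ [a]).getLast? = some a := by simp
  have hab : a ≠ b ∨ a = b := ne_or_eq a b
  rcases hab with hab | rfl
  · -- unequal flanks: merge by deleting n
    have hnd' : Nondeg ((x' ++ [a]) ++ b :: y') := by
      refine List.isChain_append.mpr ⟨by simpa [List.concat_eq_append, Nondeg, List.Chain'] using hchx, (List.isChain_cons.mp hchny).2, ?_⟩
      intro p hp q hq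
      simp [ha_last] at hp
      simp at hq
      subst hp; subst hq; exact hab
    have hsub : ((x' ++ [a]) ++ b :: y').Sublist w := by
      simp only [hw, List.concat_eq_append]
      exact List.Sublist.append_left (List.sublist_cons_self n _) _
    have := IH _ hnd' (fun z hz => by
      rcases List.mem_append.mp hz with h | h
      · exact Or.inl (by simpa using h)
      · exact Or.inr h) hsub
    simp only [hw, List.concat_eq_append, List.length_append, List.length_cons,
      List.length_nil] at this ⊢
    omega
  · -- equal flanks
    have hn3 : 3 ≤ n := by
      by_contra h
      have hn2' : n = 2 := by omega
      have ha1 : a = 1 := by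
        have := Finset.mem_Icc.mp (hmem' a (Or.inl (by simp)))
        omega
      refine hbad a n (Or.inl (by omega)) ?_
      -- [a, n, a] <+ x' ++ [a] ++ n :: a :: y'
      have : List.Sublist [a, n, a] (a :: n :: a :: y') := by
        refine List.cons_sublist_cons.mpr (List.cons_sublist_cons.mpr ?_)
        exact (List.singleton_sublist.mpr (by simp))
      refine this.trans ?_
      simp only [hw, List.concat_eq_append, List.append_assoc, List.singleton_append]
      exact List.sublist_append_right x' _
    have hheady' : ∀ q ∈ y'.head?, a ≠ q := (List.isChain_cons.mp hchy).1
    have hnd' : Nondeg ((x' ++ [a]) ++ y') := by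
      refine List.isChain_append.mpr ⟨by simpa [List.concat_eq_append, Nondeg, List.Chain'] using hchx, (List.isChain_cons.mp hchy).2, ?_⟩
      intro p hp q hq
      simp [ha_last] at hp
      subst hp; exact hheady' q hq
    have hsub : ((x' ++ [a]) ++ y').Sublist w := by
      simp only [hw, List.concat_eq_append, List.append_assoc, List.singleton_append]
      refine List.Sublist.append_left ?_ x'
      refine List.cons_sublist_cons.mpr ?_
      exact (List.sublist_cons_self a y').trans (List.sublist_cons_self n _)
    have := IH _ hnd' (fun z hz => by
      rcases List.mem_append.mp hz with h | h
      · exact Or.inl (by simpa using h)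
      · exact Or.inr (by simp [h])) hsub
    have harithB : max 1 (2*(n-1)-2) + 2 ≤ max 1 (2*n-2) := by
      rw [Nat.max_eq_right (by omega), Nat.max_eq_right (by omega)]; omega
    simp only [hw, List.concat_eq_append, List.length_append, List.length_cons,
      List.length_nil] at this ⊢
    omega


lemma indexOf_append_cons {x : List ℕ} (y : List ℕ) {n : ℕ} (h : n ∉ x) :
    (x ++ n :: y).idxOf n = x.length := by
  induction x with
  | nil => simp
  | cons c x ih =>
    have hc : c ≠ n := fun hc => h (by simp [hc])
    simp only [List.cons_append, List.idxOf_cons, List.length_cons]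
    rw [ih (fun hx => h (by simp [hx]))]
    have hcn : (c == n) = false := by simpa using hc
    simp [hcn]

lemma ringIns_eq_s18 (x y : List ℕ) (a w : ℕ) :
    ringIns (x ++ a :: y) w x.length = x ++ a :: w :: a :: y := by
  unfold ringIns
  have h1 : (x ++ a :: y).take x.length = x := List.take_left' rfl
  have h2 : (x ++ a :: y).getD x.length 0 = a := by
    rw [List.getD_eq_getElem _ _ (by simp), List.getElem_append_right le_rfl]
    simp
  have h3 : (x ++ a :: y).drop (x.length + 1) = y := by
    have : x ++ a :: y = (x ++ [a]) ++ y := by simp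
    rw [this, List.drop_left' (by simp)]
  rw [h1, h2, h3]; simp

lemma decomp_at (u : List ℕ) (j : ℕ) (hj : j < u.length) :
    u = u.take j ++ u.getD j 0 :: u.drop (j+1) ∧ (u.take j).length = j := by
  constructor
  · conv_lhs => rw [← List.take_append_drop j u]
    rw [List.drop_eq_getElem_cons hj, List.getD_eq_getElem _ _ hj]
  · simp; omega

/-- the forward direction: insertion lands in C'_{n+1} -/
lemma mapsTo_ins {n : ℕ} (hn : 3 ≤ n) {u : List ℕ} {j : ℕ} (hu : MemC' n u)
    (hjlt : j < 2 * n - 2) (hne : j ≠ u.idxOf n) : MemC' (n + 1) (ringIns u (n + 1) j) := by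
  obtain ⟨⟨hlen, hnd, ⟨hub, hsurj⟩, hijij⟩, hbad⟩ := hu
  have hlen' : u.length = 2 * n - 2 := by omega
  have hjlt' : j < u.length := by omega
  have hnu : n ∈ u := hsurj n (Finset.mem_Icc.mpr ⟨by omega, le_rfl⟩)
  obtain ⟨xu, yu, hudec, hxun, hyun⟩ := split_top u n hnd hub hbad hnu
  have hcount : u.count n = 1 := by
    rw [hudec]
    simp [List.count_append, List.count_eq_zero_of_not_mem hxun,
      List.count_eq_zero_of_not_mem hyun]
  obtain ⟨hu_eq, hxlen⟩ := decomp_at u j hjlt'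
  set x := u.take j with hxdef
  set a := u.getD j 0 with hadef
  set y := u.drop (j+1) with hydef
  have hring : ringIns u (n+1) j = x ++ a :: (n+1) :: a :: y := by
    conv_lhs => rw [hu_eq]
    rw [← hxlen, ringIns_eq_s18]
  have hau : a ∈ u := by rw [hu_eq]; simp
  have ha_icc := Finset.mem_Icc.mp (hub a hau)
  have hxsub : ∀ z ∈ x, z ∈ u := fun z hz => by rw [hu_eq]; simp [hz]
  have hysub : ∀ z ∈ y, z ∈ u := fun z hz => by rw [hu_eq]; simp [hz]
  have hn1x : (n+1) ∉ x := fun h => by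
    have := Finset.mem_Icc.mp (hub _ (hxsub _ h)); omega
  have hn1y : (n+1) ∉ y := fun h => by
    have := Finset.mem_Icc.mp (hub _ (hysub _ h)); omega
  have han1 : a ≠ n + 1 := by omega
  -- a ≠ n
  have han : a ≠ n := by
    intro h
    have h1 : u.count n = x.count n + y.count n + 1 := by
      rw [hu_eq, h]; simp [List.count_append, List.count_cons]; omega
    have hx0 : n ∉ x := fun hmem => by
      have := List.count_pos_iff.mpr hmem; omega
    have h2 : (x ++ a :: y).idxOf n = x.length := by
      rw [h]; exact indexOf_append_cons y hx0
    rw [← hu_eq] at h2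
    exact hne (by omega)
  -- counts in v
  have hcount_v1 : (x ++ a :: (n+1) :: a :: y).count (n+1) = 1 := by
    simp [List.count_append, List.count_cons, List.count_eq_zero_of_not_mem hn1x,
      List.count_eq_zero_of_not_mem hn1y, han1]
  have hcount_vn : (x ++ a :: (n+1) :: a :: y).count n ≤ 1 := by
    have h1 : u.count n = x.count n + y.count n := by
      rw [hu_eq]; simp [List.count_append, List.count_cons, han]
    simp only [List.count_append, List.count_cons]
    simp [han, (by omega : ¬ n + 1 = n)]
    omega
  -- the filtered reduction
  have hfilter : ∀ P : List ℕ, ((n+1) ∉ P) → P.Chain' (· ≠ ·) →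
      P.Sublist (x ++ a :: (n+1) :: a :: y) → P.Sublist u := by
    intro P hP hchP hsub
    have h1 : P.filter (fun z => z ≠ n+1) = P :=
      List.filter_eq_self.mpr (fun z hz => by simp; exact fun h => hP (h ▸ hz))
    have h2 : (x ++ a :: (n+1) :: a :: y).filter (fun z => z ≠ n+1)
        = x ++ a :: a :: y := by
      simp only [List.filter_append, List.filter_cons]
      rw [List.filter_eq_self.mpr (fun z hz => by simp; exact fun h => hn1x (h ▸ hz)),
        List.filter_eq_self.mpr (fun z hz => by simp; exact fun h => hn1y (h ▸ hz))]
      simp [han1]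
    have := hsub.filter (fun z => decide (z ≠ n+1))
    simp only [decide_not] at this h1 h2
    rw [h1, h2] at this
    rw [hu_eq]
    exact dedup_adjacent hchP this
  constructor
  constructor
  · -- length
    rw [hring]
    simp only [List.length_append, List.length_cons]
    have : u.length = x.length + (1 + y.length) := by rw [hu_eq]; simp; omega
    omega
  constructor
  · -- Nondeg
    rw [hring]
    have hch := hnd
    rw [hu_eq] at hch
    have hch' := List.isChain_append.mp hch
    have hchx : List.Chain' (· ≠ ·) x := hch'.1
    have hchay : List.Chain' (· ≠ ·) (a :: y) := hch'.2.1
    refine List.isChain_append.mpr ⟨hchx, ?_, ?_⟩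
    · rw [List.isChain_cons_cons]
      refine ⟨by omega, ?_⟩
      rw [List.isChain_cons_cons]
      exact ⟨by omega, hchay⟩
    · intro p hp q hq
      refine hch'.2.2 p hp q ?_
      simpa using hq
  constructor
  · -- IsSurjSeq
    constructor
    · intro z hz
      rw [hring] at hz
      simp only [List.mem_append, List.mem_cons] at hz
      rcases hz with h | h | h | h | h
      · have := Finset.mem_Icc.mp (hub _ (hxsub _ h)); simp only [Finset.mem_Icc]; omega
      · subst h; simp only [Finset.mem_Icc]; omega
      · subst h; simp only [Finset.mem_Icc]; omega
      · subst h; simp only [Finset.mem_Icc]; omega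
      · have := Finset.mem_Icc.mp (hub _ (hysub _ h)); simp only [Finset.mem_Icc]; omega
    · intro m hm
      rw [hring]
      rcases Nat.eq_or_lt_of_le (Finset.mem_Icc.mp hm).2 with h | h
      · simp [h]
      · have : m ∈ u := hsurj m (Finset.mem_Icc.mpr ⟨(Finset.mem_Icc.mp hm).1, by omega⟩)
        rw [hu_eq] at this
        simp only [List.mem_append, List.mem_cons] at this ⊢
        tauto
  · -- NoIJIJ
    intro i j' hij hsub
    rw [hring] at hsub
    have hle := hsub.count_le (n+1)
    rw [hcount_v1] at hle
    have hiP : (n+1) ∉ [i, j', i, j'] := by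
      intro hmem
      simp only [List.mem_cons, List.not_mem_nil, or_false] at hmem
      have h2 : 2 ≤ List.count (n+1) [i, j', i, j'] := by
        rcases hmem with h | h | h | h <;> subst h <;>
          (simp [List.count_cons]; try split_ifs <;> omega)
      omega
    have hch : ([i,j',i,j'] : List ℕ).Chain' (· ≠ ·) := by
      simp [List.Chain', List.isChain_cons_cons, hij, Ne.symm hij]
    exact hijij i j' hij (hfilter _ hiP hch hsub)
  · -- NoBadIJI
    intro i j' hcond hsub
    rw [hring] at hsub
    have hij : i ≠ j' := by omega
    have hle := hsub.count_le (n+1)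
    rw [hcount_v1] at hle
    have hiP : (n+1) ∉ [i, j', i] := by
      intro hmem
      simp only [List.mem_cons, List.not_mem_nil, or_false] at hmem
      rcases hmem with h | h | h
      · subst h
        have h2 : 2 ≤ List.count (n+1) [n+1, j', n+1] := by simp [List.count_cons]
        omega
      · -- j' = n+1
        rcases hcond with hc | hc
        · -- i = n, pattern [n, n+1, n]
          have hlen2 := hsub.count_le n
          have h2 : 2 ≤ List.count n [i, j', i] := by
            subst h; rw [show i = n by omega]; simp [List.count_cons]
          omega
        · -- n+1 < i but i ∈ v so i ≤ n+1
          have hiv : i ∈ x ++ a :: (n+1) :: a :: y := hsub.subset (by simp)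
          simp only [List.mem_append, List.mem_cons] at hiv
          rcases hiv with hh | hh | hh | hh | hh
          · have := Finset.mem_Icc.mp (hub _ (hxsub _ hh)); omega
          · omega
          · omega
          · omega
          · have := Finset.mem_Icc.mp (hub _ (hysub _ hh)); omega
      · subst h
        have h2 : 2 ≤ List.count (n+1) [n+1, j', n+1] := by simp [List.count_cons]
        omega
    have hch : ([i,j',i] : List ℕ).Chain' (· ≠ ·) := by
      simp [List.Chain', List.isChain_cons_cons, hij, Ne.symm hij]
    exact hbad i j' hcond (hfilter _ hiP hch hsub)

lemma ring_left_inv {n : ℕ} (hn : 3 ≤ n) {u : List ℕ} {j : ℕ} (hu : MemC' n u)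
    (hjlt : j < 2 * n - 2) :
    (ringIns u (n+1) j).idxOf (n+1) = j + 1 ∧
    ((ringIns u (n+1) j).eraseIdx (j+1)).eraseIdx (j+1) = u := by
  obtain ⟨⟨hlen, hnd, ⟨hub, hsurj⟩, hijij⟩, hbad⟩ := hu
  have hjlt' : j < u.length := by omega
  obtain ⟨hu_eq, hxlen⟩ := decomp_at u j hjlt'
  set x := u.take j with hxdef
  set a := u.getD j 0 with hadef
  set y := u.drop (j+1) with hydef
  have hring : ringIns u (n+1) j = x ++ a :: (n+1) :: a :: y := by
    conv_lhs => rw [hu_eq]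
    rw [← hxlen, ringIns_eq_s18]
  have hau : a ∈ u := by rw [hu_eq]; simp
  have han1 : a ≠ n + 1 := by
    have := Finset.mem_Icc.mp (hub a hau); omega
  have hn1x : (n+1) ∉ x := fun h => by
    have hm : (n+1) ∈ u := by rw [hu_eq]; simp [h]
    have := Finset.mem_Icc.mp (hub _ hm); omega
  constructor
  · rw [hring]
    have : x ++ a :: (n+1) :: a :: y = (x ++ [a]) ++ (n+1) :: a :: y := by simp
    rw [this, indexOf_append_cons _ (by
      simp only [List.mem_append, List.mem_singleton]
      rintro (h | h)
      · exact hn1x h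
      · exact han1 h.symm)]
    simp [hxlen]
  · rw [hring]
    have h1 : x ++ a :: (n+1) :: a :: y = (x ++ [a]) ++ (n+1) :: a :: y := by simp
    rw [h1, List.eraseIdx_append_of_length_le (by simp [hxlen])]
    simp only [List.length_append, List.length_singleton, hxlen]
    rw [show j + 1 - (j + 1) = 0 by omega]
    simp only [List.eraseIdx_cons_zero]
    rw [List.eraseIdx_append_of_length_le (by simp [hxlen])]
    simp only [List.length_append, List.length_singleton, hxlen]
    rw [show j + 1 - (j + 1) = 0 by omega]
    simp only [List.eraseIdx_cons_zero]
    rw [hu_eq]; simp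

lemma surj_ins {n : ℕ} (hn : 3 ≤ n) {v : List ℕ} (hv : MemC' (n+1) v) :
    ∃ u j, (MemC' n u ∧ j < 2 * n - 2 ∧ j ≠ u.idxOf n) ∧ ringIns u (n+1) j = v := by
  obtain ⟨⟨hlen, hnd, ⟨hub, hsurj⟩, hijij⟩, hbad⟩ := hv
  have hlen' : v.length = 2 * n := by omega
  have hn1v : (n+1) ∈ v := hsurj (n+1) (Finset.mem_Icc.mpr ⟨by omega, le_rfl⟩)
  obtain ⟨x, y, hvdec, hxn, hyn⟩ := split_top v (n+1) hnd hub hbad hn1v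
  have hmem' : ∀ z, (z ∈ x ∨ z ∈ y) → z ∈ Finset.Icc 1 n := by
    intro z hz
    have hzv : z ∈ v := by rcases hz with h | h <;> simp [hvdec, h]
    have h1 := Finset.mem_Icc.mp (hub z hzv)
    have h2 : z ≠ n + 1 := by rintro rfl; rcases hz with h | h; exacts [hxn h, hyn h]
    simp only [Finset.mem_Icc]; omega
  have hbound : ∀ w : List ℕ, Nondeg w → (∀ z ∈ w, z ∈ x ∨ z ∈ y) → w.Sublist v →
      w.length ≤ 2 * n - 2 := by
    intro w h1 h2 h3
    have := good_len n w h1 (fun z hz => hmem' z (h2 z hz))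
      (noIJIJ_sublist h3 hijij) (noBadIJI_sublist h3 hbad)
    rwa [Nat.max_eq_right (by omega)] at this
  have hchx : Nondeg x := by
    rw [hvdec] at hnd; exact (List.isChain_append.mp hnd).1
  have hchn1y : Nondeg ((n+1) :: y) := by
    rw [hvdec] at hnd; exact (List.isChain_append.mp hnd).2.1
  have hchy : Nondeg y := (List.isChain_cons.mp hchn1y).2
  have hxylen : x.length + 1 + y.length = 2 * n := by
    have h := hlen'; rw [hvdec] at h; simp at h; omega
  -- x nonempty
  rcases List.eq_nil_or_concat x with rfl | ⟨x', a, rfl⟩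
  · exfalso
    have := hbound y hchy (fun z hz => Or.inr hz)
      (by rw [hvdec]; exact (List.sublist_cons_self _ _))
    simp at hxylen
    omega
  rw [List.concat_eq_append] at *
  -- y nonempty
  rcases y with _ | ⟨b, y'⟩
  · exfalso
    have := hbound (x' ++ [a]) hchx (fun z hz => Or.inl hz)
      (by rw [hvdec]; exact List.sublist_append_left _ _)
    simp at hxylen this
    omega
  have ha_last : (x' ++ [a]).getLast? = some a := by simp
  -- equal flanks
  by_cases hab : a = b
  case neg =>
    exfalso
    have hnd' : Nondeg ((x' ++ [a]) ++ b :: y') := by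
      refine List.isChain_append.mpr ⟨hchx, hchy, ?_⟩
      intro p hp q hq
      simp [ha_last] at hp
      simp at hq
      subst hp; subst hq; exact hab
    have hsub : ((x' ++ [a]) ++ b :: y').Sublist v := by
      rw [hvdec]
      exact List.Sublist.append_left (List.sublist_cons_self _ _) _
    have := hbound _ hnd' (fun z hz => by
      rcases List.mem_append.mp hz with h | h
      · exact Or.inl h
      · exact Or.inr h) hsub
    simp only [List.length_append, List.length_cons, List.length_singleton] at this hxylen
    omega
  subst hab
  -- now v = x' ++ a :: (n+1) :: a :: y'
  have hvdec' : v = x' ++ a :: (n+1) :: a :: y' := by rw [hvdec]; simp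
  set u := x' ++ a :: y' with hudef
  have husub : u.Sublist v := by
    rw [hvdec']
    refine List.Sublist.append_left ?_ x'
    refine List.cons_sublist_cons.mpr ?_
    exact (List.sublist_cons_self a y').trans (List.sublist_cons_self (n+1) _)
  have humem : ∀ z ∈ u, z ∈ Finset.Icc 1 n := by
    intro z hz
    rcases List.mem_append.mp hz with h | h
    · exact hmem' z (Or.inl (by simp [h]))
    · rcases List.mem_cons.mp h with h | h
      · exact hmem' z (Or.inl (by simp [h]))
      · exact hmem' z (Or.inr (by simp [h]))
  have hchay : Nondeg (a :: y') := hchy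
  have hndu : Nondeg u := by
    refine List.isChain_append.mpr ⟨(List.isChain_append.mp hchx).1, hchay, ?_⟩
    intro p hp q hq
    refine (List.isChain_append.mp hchx).2.2 p hp q ?_
    simpa using hq
  have hulen : u.length = 2 * n - 2 := by
    have : u.length + 2 = v.length := by
      rw [hvdec', hudef]; simp; omega
    omega
  have hanen : a ≠ n := by
    intro h
    refine hbad n (n+1) (Or.inl rfl) ?_
    rw [hvdec', ← h]
    refine List.Sublist.trans ?_ (List.sublist_append_right x' _)
    refine List.cons_sublist_cons.mpr (List.cons_sublist_cons.mpr ?_)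
    exact List.singleton_sublist.mpr (by simp)
  have hnu : n ∈ u := by
    have hnv : n ∈ v := hsurj n (Finset.mem_Icc.mpr ⟨by omega, by omega⟩)
    rw [hvdec'] at hnv
    simp only [List.mem_append, List.mem_cons] at hnv
    rw [hudef]
    simp only [List.mem_append, List.mem_cons]
    rcases hnv with h | h | h | h | h
    · tauto
    · tauto
    · omega
    · tauto
    · tauto
  have hmemc : MemC' n u := by
    refine ⟨⟨by omega, hndu, ⟨humem, ?_⟩, noIJIJ_sublist husub hijij⟩, noBadIJI_sublist husub hbad⟩
    intro m hm
    have h1 := Finset.mem_Icc.mp hm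
    have hmv : m ∈ v := hsurj m (Finset.mem_Icc.mpr ⟨h1.1, by omega⟩)
    rw [hvdec'] at hmv
    simp only [List.mem_append, List.mem_cons] at hmv
    rw [hudef]
    simp only [List.mem_append, List.mem_cons]
    rcases hmv with h | h | h | h | h
    · tauto
    · tauto
    · omega
    · tauto
    · tauto
  refine ⟨u, x'.length, ⟨hmemc, ?_, ?_⟩, ?_⟩
  · have : x'.length < u.length := by rw [hudef]; simp
    omega
  · intro hJ
    obtain ⟨xu, yu, hudec2, hxun, hyun⟩ :=
      split_top u n hndu humem (noBadIJI_sublist husub hbad) hnu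
    have hidx : u.idxOf n = xu.length := by rw [hudec2]; exact indexOf_append_cons _ hxun
    have heq : x' = xu ∧ a :: y' = n :: yu := by
      refine List.append_inj ?_ (by omega)
      rw [← hudef, hudec2]
    have : a = n := by
      have := heq.2
      exact (List.cons.injEq _ _ _ _ ▸ this).1
    exact hanen this
  · rw [ringIns_eq_s18 x' y' a (n+1), hvdec']

lemma finite_fixed_length (m k : ℕ) : {l : List ℕ | l.length = m ∧ ∀ x ∈ l, x ≤ k}.Finite := by
  induction m with
  | zero =>
    refine Set.Finite.subset (Set.finite_singleton []) ?_
    intro l hl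
    simp only [Set.mem_setOf_eq, List.length_eq_zero_iff] at hl
    simp [hl.1]
  | succ m ih =>
    refine Set.Finite.subset (Set.Finite.image (fun p : ℕ × List ℕ => p.1 :: p.2)
      ((Set.finite_Icc 0 k).prod ih)) ?_
    rintro l ⟨hl, hb⟩
    cases l with
    | nil => simp at hl
    | cons c l' =>
      refine ⟨(c, l'), ⟨?_, ?_, ?_⟩, rfl⟩
      · simp only [Set.mem_Icc]; exact ⟨Nat.zero_le _, hb c (by simp)⟩
      · simpa using hl
      · exact fun x hx => hb x (by simp [hx])

lemma memC'_finite (n : ℕ) : {u : List ℕ | MemC' n u}.Finite := by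
  refine Set.Finite.subset (finite_fixed_length (n + (n - 2)) n) ?_
  rintro u ⟨⟨hlen, _, ⟨hub, _⟩, _⟩, _⟩
  exact ⟨hlen, fun x hx => (Finset.mem_Icc.mp (hub x hx)).2⟩

/-- for n ≥ 3, |C′_{n+1}| = (2n−3)·|C′ₙ|; the insertion map
(u, j) ↦ ů_j is a bijection from the set of pairs with u ∈ C′ₙ and j a position
other than that of the unique occurrence of n, onto C′_{n+1}. -/
theorem card_C'_recurrence (n : ℕ) (hn : 3 ≤ n) :
    {v : List ℕ | MemC' (n + 1) v}.ncard = (2 * n - 3) * {u : List ℕ | MemC' n u}.ncard ∧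
    Set.BijOn (fun uj : List ℕ × ℕ => ringIns uj.1 (n + 1) uj.2)
      {uj : List ℕ × ℕ | MemC' n uj.1 ∧ uj.2 < 2 * n - 2 ∧ uj.2 ≠ uj.1.idxOf n}
      {v : List ℕ | MemC' (n + 1) v} := by
  classical
  set f : List ℕ × ℕ → List ℕ := fun uj => ringIns uj.1 (n + 1) uj.2 with hf
  set D : Set (List ℕ × ℕ) :=
    {uj | MemC' n uj.1 ∧ uj.2 < 2 * n - 2 ∧ uj.2 ≠ uj.1.idxOf n} with hD
  have hbij : Set.BijOn f D {v : List ℕ | MemC' (n + 1) v} := by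
    refine ⟨?_, ?_, ?_⟩
    · rintro ⟨u, j⟩ ⟨h1, h2, h3⟩
      exact mapsTo_ins hn h1 h2 h3
    · rintro ⟨u1, j1⟩ ⟨h1, h2, h3⟩ ⟨u2, j2⟩ ⟨h1', h2', h3'⟩ heq
      simp only [hf] at heq
      obtain ⟨hi1, he1⟩ := ring_left_inv hn h1 h2
      obtain ⟨hi2, he2⟩ := ring_left_inv hn h1' h2'
      have hj : j1 = j2 := by
        rw [heq] at hi1
        rw [hi1] at hi2
        omega
      have hu : u1 = u2 := by
        rw [heq, hj] at he1
        rw [he1] at he2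
        exact he2
      simp [hu, hj]
    · intro v hv
      obtain ⟨u, j, h1, h2⟩ := surj_ins hn hv
      exact ⟨(u, j), h1, h2⟩
  refine ⟨?_, hbij⟩
  have hS : {u : List ℕ | MemC' n u}.Finite := memC'_finite n
  set s : Finset (List ℕ) := hS.toFinset with hs
  set d : Finset (List ℕ × ℕ) := s.biUnion
    (fun u => ({u} : Finset (List ℕ)) ×ˢ ((Finset.range (2*n-2)).erase (u.idxOf n))) with hd
  have hds : (↑d : Set (List ℕ × ℕ)) = D := by
    ext ⟨u, j⟩
    simp only [hd, Finset.coe_biUnion, Set.mem_iUnion, Finset.mem_coe, Finset.mem_product,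
      Finset.mem_singleton, Finset.mem_erase, Finset.mem_range, hD, Set.mem_setOf_eq,
      Set.Finite.mem_toFinset, hs]
    constructor
    · rintro ⟨u', hu', rfl, hj1, hj2⟩
      exact ⟨hu', hj2, hj1⟩
    · rintro ⟨hu, hj1, hj2⟩
      exact ⟨u, hu, rfl, hj2, hj1⟩
  have hcard_d : d.card = (2 * n - 3) * s.card := by
    rw [hd, Finset.card_biUnion]
    · have hconst : ∀ u ∈ s, (({u} : Finset (List ℕ)) ×ˢ
          ((Finset.range (2*n-2)).erase (u.idxOf n))).card = 2 * n - 3 := by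
        intro u hu
        have hmem : MemC' n u := by
          rw [hs] at hu; exact (Set.Finite.mem_toFinset hS).mp hu
        obtain ⟨⟨hlen, hnd, ⟨hub, hsurj⟩, _⟩, hbad⟩ := hmem
        have hnu : n ∈ u := hsurj n (Finset.mem_Icc.mpr ⟨by omega, le_rfl⟩)
        have hidx : u.idxOf n < 2 * n - 2 := by
          have := List.idxOf_lt_length_iff.mpr hnu
          omega
        rw [Finset.card_product, Finset.card_singleton, one_mul,
          Finset.card_erase_of_mem (Finset.mem_range.mpr hidx), Finset.card_range]
        omega
      rw [Finset.sum_congr rfl hconst, Finset.sum_const, smul_eq_mul, mul_comm]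
    · rintro u1 hu1 u2 hu2 hne
      rw [Function.onFun, Finset.disjoint_left]
      rintro ⟨a, b⟩ hab1 hab2
      simp only [Finset.mem_product, Finset.mem_singleton] at hab1 hab2
      exact hne (hab1.1.symm.trans hab2.1)
  calc {v : List ℕ | MemC' (n + 1) v}.ncard = (f '' D).ncard := by rw [hbij.image_eq]
    _ = D.ncard := Set.ncard_image_of_injOn hbij.injOn
    _ = d.card := by rw [← hds, Set.ncard_coe_finset]
    _ = (2 * n - 3) * s.card := hcard_d
    _ = (2 * n - 3) * {u : List ℕ | MemC' n u}.ncard := by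
        rw [Set.ncard_eq_toFinset_card _ hS]
end
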